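/- arXiv:1903.06589 — 7 statements merged into one kernel-verified Lean document; each statement's English description precedes it below -/
import Mathlib

section
/- For all n ≥ 2 and k ≥ 0, the number of permutations σ of [n] avoiding 123 and 132 with σ(n-1) = 1 and exactly k crossings equals C(n-2, k). -/
open Finset Polynomial

/-- A crossing of a permutation of [n] (0-based encoding of the 1-based definition):
`i < j < σ(i) < σ(j)` or `σ(i) < σ(j) ≤ i < j` (1-based). -/
def IsCross {n : ℕ} (σ : Equiv.Perm (Fin n)) (i j : Fin n) : Prop :=
  (i < j ∧ (j : ℕ) < (σ i : ℕ) ∧ σ i < σ j) ∨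
  (σ i < σ j ∧ (σ j : ℕ) ≤ (i : ℕ) ∧ i < j)

instance {n : ℕ} (σ : Equiv.Perm (Fin n)) (i j : Fin n) : Decidable (IsCross σ i j) := by
  unfold IsCross; infer_instance

/-- the number of crossings -/
def cr {n : ℕ} (σ : Equiv.Perm (Fin n)) : ℕ :=
  (Finset.univ.filter (fun p : Fin n × Fin n => IsCross σ p.1 p.2)).card

/-- occurrence of a length-3 pattern -/
def Contains3 {n : ℕ} (σ : Equiv.Perm (Fin n)) (τ : Fin 3 → Fin 3) : Prop :=
  ∃ i j l : Fin n, i < j ∧ j < l ∧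
    (τ 0 < τ 1 ↔ σ i < σ j) ∧ (τ 0 < τ 2 ↔ σ i < σ l) ∧ (τ 1 < τ 2 ↔ σ j < σ l)

instance {n : ℕ} (σ : Equiv.Perm (Fin n)) (τ : Fin 3 → Fin 3) :
    Decidable (Contains3 σ τ) := by
  unfold Contains3; infer_instance

def Avoids {n : ℕ} (σ : Equiv.Perm (Fin n)) (τ : Fin 3 → Fin 3) : Prop := ¬ Contains3 σ τ

instance {n : ℕ} (σ : Equiv.Perm (Fin n)) (τ : Fin 3 → Fin 3) : Decidable (Avoids σ τ) := by
  unfold Avoids; infer_instance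

def p123 : Fin 3 → Fin 3 := ![0, 1, 2]
def p132 : Fin 3 → Fin 3 := ![0, 2, 1]
def p213 : Fin 3 → Fin 3 := ![1, 0, 2]
def p231 : Fin 3 → Fin 3 := ![1, 2, 0]
def p312 : Fin 3 → Fin 3 := ![2, 0, 1]
def p321 : Fin 3 → Fin 3 := ![2, 1, 0]

namespace Stmt4
variable (m : ℕ) (T : Finset ℕ)

def P (i : ℕ) : Prop := i ∈ T ∨ i = m
instance : DecidablePred (P m T) := fun i => by unfold P; infer_instance
instance (i : ℕ) : Decidable (P m T i) := by unfold P; infer_instance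
def rs : ℕ → ℕ
  | 0 => 0
  | i+1 => if P m T i then rs i else i+1
def f (i : ℕ) : ℕ := if P m T i then m - i else m + 1 - rs m T i

variable {m T}
lemma rs_le (i : ℕ) : rs m T i ≤ i := by
  induction i with
  | zero => simp [rs]
  | succ i ih => rw [rs]; split <;> omega

lemma mem_of_rs_le {i l : ℕ} (h : rs m T i ≤ l) (hl : l < i) : P m T l := by
  induction i with
  | zero => omega
  | succ i ih =>
    rw [rs] at h
    by_cases hp : P m T i
    · rw [if_pos hp] at h
      rcases Nat.lt_succ_iff_lt_or_eq.mp hl with h' | h'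
      · exact ih h h'
      · exact h' ▸ hp
    · rw [if_neg hp] at h; omega

lemma rs_le_of {i j : ℕ} (hji : j ≤ i) (h : ∀ l, j ≤ l → l < i → P m T l) :
    rs m T i ≤ j := by
  induction i with
  | zero => simp [rs]
  | succ i ih =>
    rcases Nat.le_succ_iff_eq_or_le.mp hji with h' | h'
    · exact h' ▸ rs_le (i+1)
    · have hp : P m T i := h i h' (Nat.lt_succ_self i)
      rw [rs, if_pos hp]
      exact ih h' (fun l hl hl' => h l hl (by omega))

lemma rs_succ_of_mem {i : ℕ} (h : P m T i) : rs m T (i+1) = rs m T i := by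
  rw [rs, if_pos h]

lemma rs_succ_of_not_mem {i : ℕ} (h : ¬ P m T i) : rs m T (i+1) = i+1 := by
  rw [rs, if_neg h]

lemma rs_mono : Monotone (rs m T) := by
  apply monotone_nat_of_le_succ
  intro i
  by_cases hp : P m T i
  · rw [rs_succ_of_mem hp]
  · rw [rs_succ_of_not_mem hp]; exact (rs_le i).trans (by omega)

lemma not_mem_pred_rs {i : ℕ} (h : 0 < rs m T i) : ¬ P m T (rs m T i - 1) := by
  induction i with
  | zero => simp [rs] at h
  | succ i ih =>
    by_cases hp : P m T i
    · rw [rs_succ_of_mem hp] at h ⊢; exact ih h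
    · rw [rs_succ_of_not_mem hp] at h ⊢; simpa using hp


-- part 2
variable (m T) in
lemma exists_not_P (i : ℕ) : ∃ j, i < j ∧ ¬ P m T j := by
  refine ⟨i + m + 1 + T.sup id, by omega, ?_⟩
  rintro (h | h)
  · have := Finset.le_sup (f := id) h
    simp only [id_eq] at this; omega
  · omega

variable (m T) in
def nxt (i : ℕ) : ℕ := Nat.find (exists_not_P m T i)

lemma lt_nxt (i : ℕ) : i < nxt m T i := (Nat.find_spec (exists_not_P m T i)).1
lemma not_P_nxt (i : ℕ) : ¬ P m T (nxt m T i) := (Nat.find_spec (exists_not_P m T i)).2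
lemma nxt_le {i j : ℕ} (h1 : i < j) (h2 : ¬ P m T j) : nxt m T i ≤ j :=
  Nat.find_le ⟨h1, h2⟩
lemma P_of_lt_nxt {i l : ℕ} (h1 : i < l) (h2 : l < nxt m T i) : P m T l := by
  by_contra hc
  have := nxt_le h1 hc
  omega

lemma mem_le (hT : T ⊆ Finset.range m) {i : ℕ} (h : P m T i) : i ≤ m := by
  rcases h with h | h
  · have := hT h; simp at this; omega
  · omega

lemma not_P_succ_m (hT : T ⊆ Finset.range m) : ¬ P m T (m+1) := by
  intro h; have := mem_le hT h; omega

lemma nxt_le_succ_m (hT : T ⊆ Finset.range m) {i : ℕ} (h : i ≤ m) :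
    nxt m T i ≤ m + 1 := by
  rcases Nat.lt_or_ge i (m+1) with h' | h'
  · exact nxt_le h' (not_P_succ_m hT)
  · omega

lemma rs_nxt_le {i : ℕ} (h : P m T i) : rs m T (nxt m T i) ≤ i :=
  rs_le_of (le_of_lt (lt_nxt i)) (fun l hl hl' => by
    rcases Nat.eq_or_lt_of_le hl with h' | h'
    · exact h' ▸ h
    · exact P_of_lt_nxt h' hl')

lemma rs_nxt {i : ℕ} (h : P m T i) : rs m T (nxt m T i) = rs m T (i+1) := by
  have key : ∀ l, i + 1 ≤ l → l ≤ nxt m T i → rs m T l = rs m T (i+1) := by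
    intro l
    induction l with
    | zero => omega
    | succ l ih =>
      intro h1 h2
      rcases Nat.eq_or_lt_of_le h1 with h' | h'
      · rw [← h']
      · rw [rs_succ_of_mem (P_of_lt_nxt (i := i) (by omega) (by omega))]
        exact ih (by omega) (by omega)
  exact key _ (lt_nxt i) le_rfl

-- f lemmas
lemma f_le (hT : T ⊆ Finset.range m) {i : ℕ} : f m T i ≤ m + 1 := by
  unfold f; split <;> omega

lemma f_lt (hT : T ⊆ Finset.range m) {i : ℕ} : f m T i < m + 2 :=
  lt_of_le_of_lt (f_le hT) (by omega)

lemma f_inj (hT : T ⊆ Finset.range m) {i j : ℕ} (hi : i ≤ m + 1) (hj : j ≤ m + 1)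
    (h : f m T i = f m T j) : i = j := by
  unfold f at h
  by_cases hpi : P m T i <;> by_cases hpj : P m T j
  · rw [if_pos hpi, if_pos hpj] at h
    have := mem_le hT hpi; have := mem_le hT hpj; omega
  · rw [if_pos hpi, if_neg hpj] at h
    have h1 := rs_le (m := m) (T := T) j
    have h2 := mem_le hT hpi
    have hrs : rs m T j = i + 1 := by omega
    have h3 : 0 < rs m T j := by omega
    have h4 := not_mem_pred_rs h3
    rw [hrs] at h4; simp only [Nat.add_sub_cancel] at h4
    exact absurd hpi h4
  · rw [if_neg hpi, if_pos hpj] at h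
    have h1 := rs_le (m := m) (T := T) i
    have h2 := mem_le hT hpj
    have hrs : rs m T i = j + 1 := by omega
    have h3 : 0 < rs m T i := by omega
    have h4 := not_mem_pred_rs h3
    rw [hrs] at h4; simp only [Nat.add_sub_cancel] at h4
    exact absurd hpj h4
  · rw [if_neg hpi, if_neg hpj] at h
    have h1 := rs_le (m := m) (T := T) i
    have h2 := rs_le (m := m) (T := T) j
    have hrs : rs m T i = rs m T j := by omega
    rcases Nat.lt_trichotomy i j with h' | h' | h'
    · exact absurd (mem_of_rs_le (i := j) (by omega) h') hpi
    · exact h'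
    · exact absurd (mem_of_rs_le (i := i) (by omega) h') hpj

lemma ascent_iff (hT : T ⊆ Finset.range m) {i j : ℕ} (hij : i < j) (hj : j ≤ m + 1) :
    f m T i < f m T j ↔ (P m T i ∧ ¬ P m T j ∧ rs m T j ≤ i) := by
  unfold f
  by_cases hpi : P m T i <;> by_cases hpj : P m T j
  · rw [if_pos hpi, if_pos hpj]
    have := mem_le hT hpi; have := mem_le hT hpj
    constructor
    · intro h; omega
    · rintro ⟨-, h, -⟩; exact absurd hpj h
  · rw [if_pos hpi, if_neg hpj]
    have h1 := rs_le (m := m) (T := T) j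
    have h2 := mem_le hT hpi
    constructor
    · intro h; exact ⟨hpi, hpj, by omega⟩
    · rintro ⟨-, -, h⟩; omega
  · rw [if_neg hpi, if_pos hpj]
    have := mem_le hT hpj
    have := rs_le (m := m) (T := T) i
    constructor
    · intro h; omega
    · rintro ⟨h, -, -⟩; exact absurd h hpi
  · rw [if_neg hpi, if_neg hpj]
    have h1 := rs_mono (m := m) (T := T) (le_of_lt hij)
    have h2 := rs_le (m := m) (T := T) i
    constructor
    · intro h; omega
    · rintro ⟨h, -, -⟩; exact absurd h hpi


-- ### The permutation associated to `T`

variable (m T) in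
noncomputable def permT (hT : T ⊆ Finset.range m) (n : ℕ) (hn : n = m + 2) : Equiv.Perm (Fin n) :=
  Equiv.ofBijective (fun i => ⟨f m T i.1, by have := f_lt hT (i := i.1); omega⟩)
    (Finite.injective_iff_bijective.mp (by
      intro a b hab
      exact Fin.ext (f_inj hT (by omega) (by omega) (congrArg Fin.val hab))))

lemma permT_apply (hT : T ⊆ Finset.range m) {n : ℕ} (hn : n = m + 2) (i : Fin n) :
    (permT m T hT n hn i : ℕ) = f m T i.1 := rfl

lemma no_double_ascent (hT : T ⊆ Finset.range m) {n : ℕ} (hn : n = m + 2)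
    {i j l : Fin n} (hij : i < j) (hjl : j < l)
    (h1 : permT m T hT n hn i < permT m T hT n hn j)
    (h2 : permT m T hT n hn i < permT m T hT n hn l) : False := by
  rw [Fin.lt_def] at hij hjl h1 h2
  rw [permT_apply hT hn, permT_apply hT hn] at h1 h2
  have a1 := (ascent_iff hT hij (by omega)).mp h1
  have a2 := (ascent_iff hT (lt_trans hij hjl) (by omega)).mp h2
  exact a1.2.1 (mem_of_rs_le (i := l.1) (le_trans a2.2.2 (le_of_lt hij)) hjl)

lemma permT_avoids (hT : T ⊆ Finset.range m) {n : ℕ} (hn : n = m + 2) :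
    Avoids (permT m T hT n hn) p123 ∧ Avoids (permT m T hT n hn) p132 := by
  constructor <;>
  · rintro ⟨i, j, l, hij, hjl, c1, c2, c3⟩
    exact no_double_ascent hT hn hij hjl (c1.mp (by decide)) (c2.mp (by decide))

lemma permT_pos (hT : T ⊆ Finset.range m) {n : ℕ} (hn : n = m + 2) (h2 : 2 ≤ n) :
    (permT m T hT n hn ⟨n - 2, by omega⟩ : ℕ) = 0 := by
  rw [permT_apply hT hn]
  have h : n - 2 = m := by omega
  simp only [h]
  unfold f
  rw [if_pos (show P m T m from Or.inr rfl)]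
  omega

-- ### Crossings of `permT`

variable (m T) in
def Q (i : ℕ) : Prop :=
  nxt m T i < m - i ∨ m + 1 - rs m T (nxt m T i) ≤ i

instance : DecidablePred (Q m T) := fun i => by unfold Q; infer_instance

variable (m T) in
def crT : ℕ := ((insert m T).filter (Q m T)).card

lemma mem_insert_iff_P {i : ℕ} : i ∈ insert m T ↔ P m T i := by
  simp [P, Finset.mem_insert, or_comm]

lemma isCross_iff (hT : T ⊆ Finset.range m) {n : ℕ} (hn : n = m + 2) (a b : Fin n) :
    IsCross (permT m T hT n hn) a b ↔
      (P m T a.1 ∧ ¬ P m T b.1 ∧ rs m T b.1 ≤ a.1 ∧ a.1 < b.1 ∧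
        (b.1 < m - a.1 ∨ m + 1 - rs m T b.1 ≤ a.1)) := by
  unfold IsCross
  simp only [Fin.lt_def, permT_apply hT hn]
  constructor
  · rintro (⟨hab, hb, hasc⟩ | ⟨hasc, hb, hab⟩)
    · obtain ⟨hpa, hpb, hrs⟩ := (ascent_iff hT hab (by omega)).mp hasc
      refine ⟨hpa, hpb, hrs, hab, ?_⟩
      unfold f at hb
      rw [if_pos hpa] at hb
      exact Or.inl hb
    · obtain ⟨hpa, hpb, hrs⟩ := (ascent_iff hT hab (by omega)).mp hasc
      refine ⟨hpa, hpb, hrs, hab, ?_⟩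
      unfold f at hb
      rw [if_neg hpb] at hb
      exact Or.inr hb
  · rintro ⟨hpa, hpb, hrs, hab, hcond⟩
    have hasc : f m T a.1 < f m T b.1 := (ascent_iff hT hab (by omega)).mpr ⟨hpa, hpb, hrs⟩
    rcases hcond with h | h
    · exact Or.inl ⟨hab, by unfold f; rw [if_pos hpa]; exact h, hasc⟩
    · exact Or.inr ⟨hasc, by unfold f; rw [if_neg hpb]; exact h, hab⟩

lemma cross_snd_eq_nxt (hT : T ⊆ Finset.range m) {n : ℕ} (hn : n = m + 2) {a b : Fin n}
    (h : IsCross (permT m T hT n hn) a b) : b.1 = nxt m T a.1 := by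
  obtain ⟨hpa, hpb, hrs, hab, -⟩ := (isCross_iff hT hn a b).mp h
  have h1 : nxt m T a.1 ≤ b.1 := nxt_le hab hpb
  rcases Nat.eq_or_lt_of_le h1 with h' | h'
  · omega
  · exact absurd (mem_of_rs_le (i := b.1) (le_trans hrs (le_of_lt (lt_nxt a.1))) h')
      (not_P_nxt a.1)

lemma cr_permT (hT : T ⊆ Finset.range m) {n : ℕ} (hn : n = m + 2) :
    cr (permT m T hT n hn) = crT m T := by
  unfold cr crT
  refine Finset.card_bij (fun p _ => (p.1.1 : ℕ)) ?_ ?_ ?_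
  · intro p hp
    rw [Finset.mem_filter] at hp
    obtain ⟨-, hp⟩ := hp
    have hb := cross_snd_eq_nxt hT hn hp
    obtain ⟨hpa, hpb, hrs, hab, hcond⟩ := (isCross_iff hT hn p.1 p.2).mp hp
    rw [Finset.mem_filter, mem_insert_iff_P]
    refine ⟨hpa, ?_⟩
    unfold Q
    rw [← hb]
    exact hcond
  · intro p hp q hq hpq
    rw [Finset.mem_filter] at hp hq
    have h1 := cross_snd_eq_nxt hT hn hp.2
    have h2 := cross_snd_eq_nxt hT hn hq.2
    have h3 : p.1 = q.1 := Fin.ext hpq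
    refine Prod.ext h3 (Fin.ext ?_)
    rw [h1, h2, h3]
  · intro i hi
    rw [Finset.mem_filter, mem_insert_iff_P] at hi
    obtain ⟨hpi, hq⟩ := hi
    have him : i ≤ m := mem_le hT hpi
    have hnx : nxt m T i ≤ m + 1 := nxt_le_succ_m hT him
    refine ⟨(⟨i, by omega⟩, ⟨nxt m T i, by omega⟩), ?_, rfl⟩
    rw [Finset.mem_filter]
    refine ⟨Finset.mem_univ _, ?_⟩
    rw [isCross_iff hT hn]
    exact ⟨hpi, not_P_nxt i, rs_nxt_le hpi, lt_nxt i, hq⟩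

-- ### Classification

lemma f_surj_excluded : ∀ i v : ℕ, m + 1 - i ≤ v → v ≤ m + 1 →
    v ≠ m + 1 - rs m T i → ∃ i' < i, f m T i' = v := by
  intro i
  induction i with
  | zero => intro v h1 h2 h3; simp [rs] at h3; omega
  | succ i ih =>
    intro v h1 h2 h3
    by_cases hp : P m T i
    · rw [rs_succ_of_mem hp] at h3
      by_cases hv : v = m - i
      · exact ⟨i, Nat.lt_succ_self i, by unfold f; rw [if_pos hp]; omega⟩
      · obtain ⟨i', hi', hf⟩ := ih v (by omega) h2 h3
        exact ⟨i', by omega, hf⟩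
    · rw [rs_succ_of_not_mem hp] at h3
      by_cases hv : v = m + 1 - rs m T i
      · exact ⟨i, Nat.lt_succ_self i, by unfold f; rw [if_neg hp]; omega⟩
      · have hrl := rs_le (m := m) (T := T) i
        obtain ⟨i', hi', hf⟩ := ih v (by omega) h2 hv
        exact ⟨i', by omega, hf⟩

def sv {n : ℕ} (σ : Equiv.Perm (Fin n)) (i : ℕ) : ℕ :=
  if h : i < n then (σ ⟨i, h⟩ : ℕ) else 0

variable (m) in
def Tof {n : ℕ} (σ : Equiv.Perm (Fin n)) : Finset ℕ :=
  (Finset.range m).filter (fun i => sv σ i = m - i)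

lemma Tof_subset {n : ℕ} (σ : Equiv.Perm (Fin n)) : Tof m σ ⊆ Finset.range m :=
  Finset.filter_subset _ _

lemma sv_inj {n : ℕ} (σ : Equiv.Perm (Fin n)) {i j : ℕ} (hi : i < n) (hj : j < n)
    (h : sv σ i = sv σ j) : i = j := by
  unfold sv at h
  rw [dif_pos hi, dif_pos hj] at h
  have h2 := σ.injective (Fin.ext h)
  exact congrArg Fin.val h2

lemma classify {n : ℕ} (hn : n = m + 2) (σ : Equiv.Perm (Fin n))
    (hD2 : ∀ i : Fin n, m - i.1 ≤ (σ i : ℕ))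
    (hpos : sv σ m = 0) :
    ∀ i : ℕ, i < n → sv σ i = f m (Tof m σ) i := by
  intro i
  induction i using Nat.strong_induction_on with
  | _ i IH =>
    intro hi
    by_cases hp : P m (Tof m σ) i
    · rcases hp with hp | hp
      · have hp' := hp
        unfold Tof at hp'
        rw [Finset.mem_filter] at hp'
        rw [hp'.2]
        unfold f
        rw [if_pos (show P m (Tof m σ) i from Or.inl hp)]
      · rw [hp, hpos]
        unfold f
        rw [if_pos (show P m (Tof m σ) m from Or.inr rfl)]
        omega
    · have hfi : f m (Tof m σ) i = m + 1 - rs m (Tof m σ) i := by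
        unfold f; rw [if_neg hp]
      have hvlt : sv σ i ≤ m + 1 := by
        unfold sv; rw [dif_pos hi]
        have := (σ ⟨i, hi⟩).2
        omega
      have hvge : m - i ≤ sv σ i := by
        unfold sv; rw [dif_pos hi]; exact hD2 ⟨i, hi⟩
      have hvne : sv σ i ≠ m - i := by
        intro hc
        rcases Nat.lt_trichotomy i m with h' | h' | h'
        · refine hp (Or.inl ?_)
          unfold Tof
          rw [Finset.mem_filter, Finset.mem_range]
          exact ⟨h', hc⟩
        · exact hp (Or.inr h')
        · have him : i = m + 1 := by omega
          have hz : sv σ i = 0 := by omega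
          have := sv_inj σ (i := i) (j := m) hi (by omega) (by rw [hz, hpos])
          omega
      by_contra hc
      rw [hfi] at hc
      obtain ⟨i', hi', hf⟩ := f_surj_excluded i (sv σ i) (by omega) hvlt hc
      rw [← IH i' hi' (by omega)] at hf
      have := sv_inj σ (by omega) hi hf
      omega

lemma eq_permT {n : ℕ} (hn : n = m + 2) (σ : Equiv.Perm (Fin n))
    (hD2 : ∀ i : Fin n, m - i.1 ≤ (σ i : ℕ))
    (hpos : sv σ m = 0) :
    σ = permT m (Tof m σ) (Tof_subset σ) n hn := by
  apply Equiv.ext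
  intro i
  apply Fin.ext
  rw [permT_apply (Tof_subset σ) hn]
  have := classify hn σ hD2 hpos i.1 i.2
  unfold sv at this
  rw [dif_pos i.2] at this
  exact this

lemma Tof_permT (hT : T ⊆ Finset.range m) {n : ℕ} (hn : n = m + 2) :
    Tof m (permT m T hT n hn) = T := by
  ext i
  unfold Tof
  rw [Finset.mem_filter, Finset.mem_range]
  constructor
  · rintro ⟨him, hf⟩
    unfold sv at hf
    rw [dif_pos (show i < n by omega)] at hf
    rw [permT_apply hT hn] at hf
    simp only [Fin.val_mk] at hf
    by_cases hp : P m T i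
    · rcases hp with hp | hp
      · exact hp
      · omega
    · exfalso
      unfold f at hf
      rw [if_neg hp] at hf
      have h1 := rs_le (m := m) (T := T) i
      have h2 : rs m T i = i + 1 := by omega
      omega
  · intro hiT
    have him : i < m := by have := hT hiT; simpa using this
    refine ⟨him, ?_⟩
    unfold sv
    rw [dif_pos (show i < n by omega), permT_apply hT hn]
    simp only [Fin.val_mk]
    unfold f
    rw [if_pos (show P m T i from Or.inl hiT)]

-- avoidance consequences for a general σ
lemma F1 {n : ℕ} {σ : Equiv.Perm (Fin n)} (h1 : Avoids σ p123) (h2 : Avoids σ p132)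
    {i j l : Fin n} (hij : i < j) (hjl : j < l)
    (ha : σ i < σ j) (hb : σ i < σ l) : False := by
  rcases lt_trichotomy (σ j) (σ l) with h | h | h
  · exact h1 ⟨i, j, l, hij, hjl, iff_of_true (by decide) ha, iff_of_true (by decide) hb,
      iff_of_true (by decide) h⟩
  · exact absurd (σ.injective h) (ne_of_lt hjl)
  · exact h2 ⟨i, j, l, hij, hjl, iff_of_true (by decide) ha, iff_of_true (by decide) hb,
      iff_of_false (by decide) (not_lt.mpr (le_of_lt h))⟩

lemma D2_of_avoids {n : ℕ} (hn : n = m + 2) {σ : Equiv.Perm (Fin n)}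
    (h1 : Avoids σ p123) (h2 : Avoids σ p132) (a : Fin n) :
    m - a.1 ≤ (σ a : ℕ) := by
  classical
  set A := (Finset.Ioi a).filter (fun j => σ a < σ j) with hA
  set B := (Finset.Ioi a).filter (fun j => σ j < σ a) with hB
  have hAcard : A.card ≤ 1 := by
    rw [Finset.card_le_one]
    intro x hx y hy
    rw [hA, Finset.mem_filter, Finset.mem_Ioi] at hx hy
    by_contra hne
    rcases lt_trichotomy x y with h | h | h
    · exact F1 h1 h2 hx.1 h hx.2 hy.2
    · exact hne h
    · exact F1 h1 h2 hy.1 h hy.2 hx.2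
  have hBcard : B.card ≤ (σ a : ℕ) := by
    have : B.image (fun j => (σ j : ℕ)) ⊆ Finset.range (σ a : ℕ) := by
      intro v hv
      rw [Finset.mem_image] at hv
      obtain ⟨j, hj, rfl⟩ := hv
      rw [hB, Finset.mem_filter] at hj
      rw [Finset.mem_range]
      exact hj.2
    have hinj : Set.InjOn (fun j => ((σ j : ℕ))) B := by
      intro x _ y _ hxy
      exact σ.injective (Fin.ext hxy)
    calc B.card = (B.image (fun j => (σ j : ℕ))).card :=
          (Finset.card_image_of_injOn hinj).symm
      _ ≤ (Finset.range (σ a : ℕ)).card := Finset.card_le_card this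
      _ = (σ a : ℕ) := Finset.card_range _
  have hsub : Finset.Ioi a ⊆ A ∪ B := by
    intro j hj
    rw [Finset.mem_Ioi] at hj
    rcases lt_trichotomy (σ a) (σ j) with h | h | h
    · exact Finset.mem_union_left _ (Finset.mem_filter.mpr ⟨Finset.mem_Ioi.mpr hj, h⟩)
    · exact absurd (σ.injective h) (ne_of_lt hj)
    · exact Finset.mem_union_right _ (Finset.mem_filter.mpr ⟨Finset.mem_Ioi.mpr hj, h⟩)
  have hcard := (Finset.card_le_card hsub).trans (Finset.card_union_le A B)
  rw [Fin.card_Ioi] at hcard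
  omega

-- ### Counting `crT` over subsets: mirror-interval reformulation

variable (m T) in
/-- all of `[a,b]` lies in `T ∪ {m}` -/
def V (a b : ℕ) : Prop := ∀ l ∈ Finset.Icc a b, P m T l

instance (a b : ℕ) : Decidable (V m T a b) := by unfold V; infer_instance

lemma V_iff_lt_nxt {i u : ℕ} (hi : P m T i) (hu : i ≤ u) :
    V m T i u ↔ u < nxt m T i := by
  constructor
  · intro h
    by_contra hc
    exact not_P_nxt i (h _ (Finset.mem_Icc.mpr ⟨le_of_lt (lt_nxt i), by omega⟩))
  · intro h l hl
    rw [Finset.mem_Icc] at hl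
    rcases Nat.eq_or_lt_of_le hl.1 with h' | h'
    · exact h' ▸ hi
    · exact P_of_lt_nxt h' (by omega)

lemma V_iff_rs_le {i v : ℕ} (hv : v ≤ i) :
    V m T v i ↔ rs m T (i+1) ≤ v := by
  constructor
  · intro h
    exact rs_le_of (by omega) (fun l h1 h2 => h l (Finset.mem_Icc.mpr ⟨h1, by omega⟩))
  · intro h l hl
    rw [Finset.mem_Icc] at hl
    exact mem_of_rs_le (i := i+1) (by omega) (by omega)

lemma Q_iff_mirror (hT : T ⊆ Finset.range m) {i : ℕ} (hi : P m T i) :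
    Q m T i ↔ ((2*i+2 ≤ m ∧ ¬ V m T i (m-1-i)) ∨ (m+1 ≤ 2*i ∧ ¬ V m T (m-i) i)) := by
  have him := mem_le hT hi
  have hnx := lt_nxt (m := m) (T := T) i
  have hrs := rs_nxt_le hi
  have hrn := rs_nxt hi
  have hr1 := rs_le (m := m) (T := T) (i+1)
  rcases Nat.lt_or_ge (2*i+2) (m+1) with hpos | hpos
  · -- 2i+2 ≤ m : only first disjunct possible
    have hV := V_iff_lt_nxt hi (u := m-1-i) (by omega)
    unfold Q
    constructor
    · rintro (h | h)
      · exact Or.inl ⟨by omega, by rw [hV]; omega⟩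
      · omega
    · rintro (⟨h1, h2⟩ | ⟨h1, h2⟩)
      · rw [hV] at h2; exact Or.inl (by omega)
      · omega
  · rcases Nat.lt_or_ge (2*i) (m+1) with hmid | hhi
    · -- middle : no crossing
      unfold Q
      constructor
      · rintro (h | h) <;> omega
      · rintro (⟨h1, -⟩ | ⟨h1, -⟩) <;> omega
    · -- 2i ≥ m+1
      have hV := V_iff_rs_le (m := m) (T := T) (i := i) (v := m-i) (by omega)
      unfold Q
      constructor
      · rintro (h | h)
        · omega
        · refine Or.inr ⟨by omega, ?_⟩
          rw [hV, ← hrn]; omega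
      · rintro (⟨h1, h2⟩ | ⟨h1, h2⟩)
        · omega
        · rw [hV, ← hrn] at h2
          exact Or.inr (by omega)

-- the centered chain
variable (m) in
def E (t : ℕ) : ℕ := if (m + t) % 2 = 0 then (m+1-t)/2 else (m+t-1)/2

variable (m) in
def tOf (i : ℕ) : ℕ := if 2*i < m then m - 2*i else 2*i+1-m

lemma E_le {t : ℕ} (h1 : 1 ≤ t) (h2 : t ≤ m + 1) : E m t ≤ m := by
  unfold E; split <;> omega

lemma E_inj {s t : ℕ} (hs1 : 1 ≤ s) (hs2 : s ≤ m+1) (ht1 : 1 ≤ t) (ht2 : t ≤ m+1)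
    (h : E m s = E m t) : s = t := by
  unfold E at h
  by_cases h1 : (m+s) % 2 = 0 <;> by_cases h2 : (m+t) % 2 = 0
  · rw [if_pos h1, if_pos h2] at h; omega
  · rw [if_pos h1, if_neg h2] at h; omega
  · rw [if_neg h1, if_pos h2] at h; omega
  · rw [if_neg h1, if_neg h2] at h; omega

lemma tOf_ge_one {i : ℕ} (h : i ≤ m) : 1 ≤ tOf m i := by
  unfold tOf; split <;> omega

lemma tOf_le {i : ℕ} (h : i ≤ m) : tOf m i ≤ m + 1 := by
  unfold tOf; split <;> omega

lemma E_tOf {i : ℕ} (h : i ≤ m) : E m (tOf m i) = i := by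
  unfold tOf
  rcases Nat.lt_or_ge (2*i) m with h1 | h1
  · rw [if_pos h1]
    unfold E
    rw [if_pos (by omega)]
    omega
  · rw [if_neg (by omega)]
    unfold E
    rw [if_neg (by omega)]
    omega

lemma E_last : E m (m+1) = m := by
  unfold E
  rw [if_neg (by omega)]
  omega

variable (m T) in
def KP (t : ℕ) : Prop := V m T ((m+1-t)/2) ((m+t-1)/2)

lemma KP_one : KP m T 1 ↔ P m T (E m 1) := by
  have hE : E m 1 = m / 2 := by unfold E; split <;> omega
  unfold KP V
  rw [hE]
  constructor
  · intro h
    exact h _ (Finset.mem_Icc.mpr ⟨by omega, by omega⟩)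
  · intro h l hl
    rw [Finset.mem_Icc] at hl
    have : l = m / 2 := by omega
    exact this ▸ h

lemma KP_succ {t : ℕ} (ht : 1 ≤ t) :
    KP m T (t+1) ↔ (KP m T t ∧ P m T (E m (t+1))) := by
  unfold KP V
  by_cases hpar : (m + (t+1)) % 2 = 0
  · have hE : E m (t+1) = (m-t)/2 := by unfold E; rw [if_pos hpar]; omega
    rw [hE]
    constructor
    · intro h
      exact ⟨fun l hl => h l (by rw [Finset.mem_Icc] at hl ⊢; omega),
        h _ (Finset.mem_Icc.mpr ⟨by omega, by omega⟩)⟩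
    · rintro ⟨h1, h2⟩ l hl
      rw [Finset.mem_Icc] at hl
      by_cases he : l = (m-t)/2
      · exact he ▸ h2
      · exact h1 l (Finset.mem_Icc.mpr ⟨by omega, by omega⟩)
  · have hE : E m (t+1) = (m+t)/2 := by unfold E; rw [if_neg hpar]; omega
    rw [hE]
    constructor
    · intro h
      exact ⟨fun l hl => h l (by rw [Finset.mem_Icc] at hl ⊢; omega),
        h _ (Finset.mem_Icc.mpr ⟨by omega, by omega⟩)⟩
    · rintro ⟨h1, h2⟩ l hl
      rw [Finset.mem_Icc] at hl
      by_cases he : l = (m+t)/2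
      · exact he ▸ h2
      · exact h1 l (Finset.mem_Icc.mpr ⟨by omega, by omega⟩)

lemma KP_iff {t : ℕ} (ht : 1 ≤ t) :
    KP m T t ↔ ∀ s ∈ Finset.Icc 1 t, P m T (E m s) := by
  induction t with
  | zero => omega
  | succ t ih =>
    rcases Nat.eq_or_lt_of_le ht with h' | h'
    · rw [← h']
      simp only [Finset.Icc_self, Finset.mem_singleton]
      rw [show (1:ℕ) = 0 + 1 from rfl] at *
      constructor
      · intro h s hs; subst hs; exact KP_one.mp h
      · intro h; exact KP_one.mpr (h 1 rfl)
    · have ht1 : 1 ≤ t := by omega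
      rw [KP_succ ht1, ih ht1]
      constructor
      · rintro ⟨h1, h2⟩ s hs
        rw [Finset.mem_Icc] at hs
        rcases Nat.eq_or_lt_of_le hs.2 with h' | h'
        · exact h' ▸ h2
        · exact h1 s (Finset.mem_Icc.mpr ⟨hs.1, by omega⟩)
      · intro h
        exact ⟨fun s hs => h s (by rw [Finset.mem_Icc] at hs ⊢; omega),
          h _ (Finset.mem_Icc.mpr ⟨by omega, le_rfl⟩)⟩

variable (m T) in
instance ASdec : DecidablePred
    (fun t => P m T (E m t) ∧ ∃ s ∈ Finset.Ico 1 t, ¬ P m T (E m s)) :=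
  fun t => by infer_instance

variable (m T) in
def AS : Finset ℕ :=
  (Finset.Icc 1 (m+1)).filter
    (fun t => P m T (E m t) ∧ ∃ s ∈ Finset.Ico 1 t, ¬ P m T (E m s))

lemma mem_AS {t : ℕ} : t ∈ AS m T ↔
    ((1 ≤ t ∧ t ≤ m+1) ∧ (P m T (E m t) ∧ ∃ s ∈ Finset.Ico 1 t, ¬ P m T (E m s))) := by
  unfold AS
  rw [Finset.mem_filter, Finset.mem_Icc]

lemma crT_eq_AS (hT : T ⊆ Finset.range m) : crT m T = (AS m T).card := by
  unfold crT
  refine (Finset.card_bij (fun t _ => E m t) ?_ ?_ ?_).symm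
  · intro t ht
    rw [mem_AS] at ht
    obtain ⟨⟨ht1, ht2⟩, hx, s, hs, hxs⟩ := ht
    rw [Finset.mem_Ico] at hs
    have ht2' : 2 ≤ t := by omega
    have hKP : ¬ KP m T t := fun h =>
      hxs ((KP_iff (by omega)).mp h s (Finset.mem_Icc.mpr ⟨hs.1, by omega⟩))
    rw [Finset.mem_filter, mem_insert_iff_P]
    refine ⟨hx, ?_⟩
    rw [Q_iff_mirror hT hx]
    by_cases hpar : (m+t) % 2 = 0
    · have hE : E m t = (m+1-t)/2 := by unfold E; rw [if_pos hpar]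
      refine Or.inl ⟨by omega, ?_⟩
      have hiff : V m T (E m t) (m-1-E m t) ↔ KP m T t := by
        unfold KP
        rw [hE, show m-1-(m+1-t)/2 = (m+t-1)/2 by omega]
      rw [hiff]; exact hKP
    · have hE : E m t = (m+t-1)/2 := by unfold E; rw [if_neg hpar]
      refine Or.inr ⟨by omega, ?_⟩
      have hiff : V m T (m - E m t) (E m t) ↔ KP m T t := by
        unfold KP
        rw [hE, show m-(m+t-1)/2 = (m+1-t)/2 by omega]
      rw [hiff]; exact hKP
  · intro s hs t ht h
    rw [mem_AS] at hs ht
    exact E_inj hs.1.1 hs.1.2 ht.1.1 ht.1.2 h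
  · intro i hi
    rw [Finset.mem_filter, mem_insert_iff_P] at hi
    obtain ⟨hpi, hq⟩ := hi
    have him := mem_le hT hpi
    refine ⟨tOf m i, ?_, E_tOf him⟩
    rw [mem_AS, E_tOf him]
    refine ⟨⟨tOf_ge_one him, tOf_le him⟩, hpi, ?_⟩
    rw [Q_iff_mirror hT hpi] at hq
    have hKP : ¬ KP m T (tOf m i) := by
      rcases hq with ⟨h1, h2⟩ | ⟨h1, h2⟩
      · have htof : tOf m i = m - 2*i := by unfold tOf; rw [if_pos (by omega)]
        unfold KP
        rw [htof, show (m+1-(m-2*i))/2 = i by omega,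
          show (m+(m-2*i)-1)/2 = m-1-i by omega]
        exact h2
      · have htof : tOf m i = 2*i+1-m := by unfold tOf; rw [if_neg (by omega)]
        unfold KP
        rw [htof, show (m+1-(2*i+1-m))/2 = m-i by omega,
          show (m+(2*i+1-m)-1)/2 = i by omega]
        exact h2
    rw [KP_iff (tOf_ge_one him)] at hKP
    push_neg at hKP
    obtain ⟨s, hs, hxs⟩ := hKP
    rw [Finset.mem_Icc] at hs
    have hst : s ≠ tOf m i := by
      intro h
      rw [h, E_tOf him] at hxs
      exact hxs hpi
    exact ⟨s, Finset.mem_Ico.mpr ⟨hs.1, by omega⟩, hxs⟩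

variable (m T) in
instance Phi2dec : DecidablePred
    (fun t => (¬ P m T (E m t) ∧ ∀ s ∈ Finset.Ico 1 t, P m T (E m s)) ∨
      (P m T (E m t) ∧ ∃ s ∈ Finset.Ico 1 t, ¬ P m T (E m s))) :=
  fun t => by infer_instance

variable (m T) in
def Phi2 : Finset ℕ :=
  (Finset.Icc 1 m).filter
    (fun t => (¬ P m T (E m t) ∧ ∀ s ∈ Finset.Ico 1 t, P m T (E m s)) ∨
      (P m T (E m t) ∧ ∃ s ∈ Finset.Ico 1 t, ¬ P m T (E m s)))

lemma mem_Phi2 {t : ℕ} : t ∈ Phi2 m T ↔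
    ((1 ≤ t ∧ t ≤ m) ∧ ((¬ P m T (E m t) ∧ ∀ s ∈ Finset.Ico 1 t, P m T (E m s)) ∨
      (P m T (E m t) ∧ ∃ s ∈ Finset.Ico 1 t, ¬ P m T (E m s)))) := by
  unfold Phi2
  rw [Finset.mem_filter, Finset.mem_Icc]

lemma card_Phi2 (hT : T ⊆ Finset.range m) : (Phi2 m T).card = crT m T := by
  rw [crT_eq_AS hT]
  refine Finset.card_bij (fun t _ => if P m T (E m t) then t else m + 1) ?_ ?_ ?_
  · intro t ht
    show (if P m T (E m t) then t else m + 1) ∈ AS m T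
    rw [mem_Phi2] at ht
    obtain ⟨⟨ht1, ht2⟩, hcase⟩ := ht
    rw [mem_AS]
    rcases hcase with ⟨hx, -⟩ | ⟨hx, hex⟩
    · rw [if_neg hx]
      refine ⟨⟨by omega, le_rfl⟩, ?_, t, Finset.mem_Ico.mpr ⟨ht1, by omega⟩, hx⟩
      rw [E_last]
      exact Or.inr rfl
    · rw [if_pos hx]
      exact ⟨⟨ht1, by omega⟩, hx, hex⟩
  · intro s hs t ht h
    replace h : (if P m T (E m s) then s else m + 1)
        = (if P m T (E m t) then t else m + 1) := h
    rw [mem_Phi2] at hs ht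
    by_cases hxs : P m T (E m s) <;> by_cases hxt : P m T (E m t)
    · rwa [if_pos hxs, if_pos hxt] at h
    · rw [if_pos hxs, if_neg hxt] at h; omega
    · rw [if_neg hxs, if_pos hxt] at h; omega
    · rcases hs.2 with ⟨-, hall_s⟩ | ⟨hx, -⟩
      · rcases ht.2 with ⟨-, hall_t⟩ | ⟨hx, -⟩
        · rcases Nat.lt_trichotomy s t with h' | h' | h'
          · exact absurd (hall_t s (Finset.mem_Ico.mpr ⟨hs.1.1, h'⟩)) hxs
          · exact h'
          · exact absurd (hall_s t (Finset.mem_Ico.mpr ⟨ht.1.1, h'⟩)) hxt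
        · exact absurd hx hxt
      · exact absurd hx hxs
  · intro a ha
    rw [mem_AS] at ha
    obtain ⟨⟨ha1, ha2⟩, hx, s, hs, hxs⟩ := ha
    rw [Finset.mem_Ico] at hs
    rcases Nat.eq_or_lt_of_le ha2 with hlast | hlt
    · -- a = m+1 : map the least zero to it
      haveI : DecidablePred (fun t => 1 ≤ t ∧ t ≤ m ∧ ¬ P m T (E m t)) :=
        fun t => by infer_instance
      have hex : ∃ t, (1 ≤ t ∧ t ≤ m ∧ ¬ P m T (E m t)) := ⟨s, hs.1, by omega, hxs⟩
      obtain ⟨hr1, hr2, hr3⟩ := Nat.find_spec hex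
      refine ⟨Nat.find hex, ?_, ?_⟩
      · rw [mem_Phi2]
        refine ⟨⟨hr1, hr2⟩, Or.inl ⟨hr3, ?_⟩⟩
        intro u hu
        rw [Finset.mem_Ico] at hu
        by_contra hc
        have hfu : Nat.find hex ≤ u :=
          Nat.find_le (⟨hu.1, by omega, hc⟩ : 1 ≤ u ∧ u ≤ m ∧ ¬ P m T (E m u))
        omega
      · show (if P m T (E m (Nat.find hex)) then Nat.find hex else m + 1) = a
        rw [if_neg hr3]; omega
    · refine ⟨a, ?_, ?_⟩
      · rw [mem_Phi2]
        exact ⟨⟨ha1, by omega⟩, Or.inr ⟨hx, s, Finset.mem_Ico.mpr hs, hxs⟩⟩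
      · show (if P m T (E m a) then a else m + 1) = a
        rw [if_pos hx]

lemma tOf_le_m {i : ℕ} (h : i < m) : tOf m i ≤ m := by
  unfold tOf; split <;> omega

lemma E_ne_m {t : ℕ} (h1 : 1 ≤ t) (h2 : t ≤ m) : E m t ≠ m := by
  intro hc
  have := E_inj h1 (by omega) (by omega : 1 ≤ m+1) le_rfl (by rw [hc, E_last])
  omega

lemma tOf_E {t : ℕ} (h1 : 1 ≤ t) (h2 : t ≤ m+1) : tOf m (E m t) = t :=
  E_inj (tOf_ge_one (E_le h1 h2)) (tOf_le (E_le h1 h2)) h1 h2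
    (by rw [E_tOf (E_le h1 h2)])

lemma Phi2_inj {T' : Finset ℕ} (hT : T ⊆ Finset.range m) (hT' : T' ⊆ Finset.range m)
    (h : Phi2 m T = Phi2 m T') : T = T' := by
  have claim : ∀ t, 1 ≤ t → t ≤ m → (P m T (E m t) ↔ P m T' (E m t)) := by
    intro t
    induction t using Nat.strong_induction_on with
    | _ t IH =>
      intro ht1 ht2
      by_cases hz : ∃ s ∈ Finset.Ico 1 t, ¬ P m T (E m s)
      · have hz' : ∃ s ∈ Finset.Ico 1 t, ¬ P m T' (E m s) := by
          obtain ⟨s, hs, hns⟩ := hz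
          rw [Finset.mem_Ico] at hs
          exact ⟨s, Finset.mem_Ico.mpr hs,
            fun hc => hns ((IH s hs.2 hs.1 (by omega)).mpr hc)⟩
        have e1 : t ∈ Phi2 m T ↔ P m T (E m t) := by
          rw [mem_Phi2]
          constructor
          · rintro ⟨-, ⟨-, hall⟩ | ⟨hx, -⟩⟩
            · obtain ⟨s, hs, hns⟩ := hz
              exact absurd (hall s hs) hns
            · exact hx
          · intro hx
            exact ⟨⟨ht1, ht2⟩, Or.inr ⟨hx, hz⟩⟩
        have e2 : t ∈ Phi2 m T' ↔ P m T' (E m t) := by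
          rw [mem_Phi2]
          constructor
          · rintro ⟨-, ⟨-, hall⟩ | ⟨hx, -⟩⟩
            · obtain ⟨s, hs, hns⟩ := hz'
              exact absurd (hall s hs) hns
            · exact hx
          · intro hx
            exact ⟨⟨ht1, ht2⟩, Or.inr ⟨hx, hz'⟩⟩
        rw [← e1, ← e2, h]
      · push_neg at hz
        have hz' : ∀ s ∈ Finset.Ico 1 t, P m T' (E m s) := by
          intro s hs
          have hs' := Finset.mem_Ico.mp hs
          exact (IH s hs'.2 hs'.1 (by omega)).mp (hz s hs)
        have e1 : t ∈ Phi2 m T ↔ ¬ P m T (E m t) := by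
          rw [mem_Phi2]
          constructor
          · rintro ⟨-, ⟨hx, -⟩ | ⟨-, s, hs, hns⟩⟩
            · exact hx
            · exact absurd (hz s hs) hns
          · intro hx
            exact ⟨⟨ht1, ht2⟩, Or.inl ⟨hx, hz⟩⟩
        have e2 : t ∈ Phi2 m T' ↔ ¬ P m T' (E m t) := by
          rw [mem_Phi2]
          constructor
          · rintro ⟨-, ⟨hx, -⟩ | ⟨-, s, hs, hns⟩⟩
            · exact hx
            · exact absurd (hz' s hs) hns
          · intro hx
            exact ⟨⟨ht1, ht2⟩, Or.inl ⟨hx, hz'⟩⟩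
        rw [← not_iff_not, ← e1, ← e2, h]
  ext i
  by_cases him : i < m
  · have hb1 := tOf_ge_one (le_of_lt him)
    have hb2 := tOf_le_m him
    have hEt := E_tOf (le_of_lt him)
    have hkey := claim (tOf m i) hb1 hb2
    rw [hEt] at hkey
    constructor
    · intro hi
      rcases hkey.mp (Or.inl hi) with h' | h'
      · exact h'
      · omega
    · intro hi
      rcases hkey.mpr (Or.inl hi) with h' | h'
      · exact h'
      · omega
  · constructor <;> intro hi
    · exact absurd (Finset.mem_range.mp (hT hi)) him
    · exact absurd (Finset.mem_range.mp (hT' hi)) him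

lemma Phi2_surj {S : Finset ℕ} (hS : S ⊆ Finset.Icc 1 m) :
    ∃ T, T ⊆ Finset.range m ∧ Phi2 m T = S := by
  classical
  set xS : ℕ → Prop :=
    fun t => (t ∉ S ∧ ∀ s ∈ S, ¬ s < t) ∨ (t ∈ S ∧ ∃ s ∈ S, s < t) with hxS
  set T := (Finset.range m).filter (fun i => xS (tOf m i)) with hTdef
  have hTsub : T ⊆ Finset.range m := Finset.filter_subset _ _
  refine ⟨T, hTsub, ?_⟩
  have hx : ∀ t, 1 ≤ t → t ≤ m → (P m T (E m t) ↔ xS t) := by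
    intro t ht1 ht2
    have hEle : E m t ≤ m := E_le ht1 (by omega)
    have hEne : E m t ≠ m := E_ne_m ht1 ht2
    constructor
    · rintro (hmem | hmem)
      · rw [hTdef, Finset.mem_filter] at hmem
        rw [tOf_E ht1 (by omega)] at hmem
        exact hmem.2
      · exact absurd hmem hEne
    · intro hxt
      refine Or.inl ?_
      rw [hTdef, Finset.mem_filter, Finset.mem_range]
      rw [tOf_E ht1 (by omega)]
      exact ⟨by omega, hxt⟩
  ext t
  rw [mem_Phi2]
  constructor
  · rintro ⟨⟨ht1, ht2⟩, hdisj⟩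
    rcases hdisj with ⟨hnx, hall⟩ | ⟨hxt, s, hs, hns⟩
    · -- first zero: t must be the minimum of S
      rw [hx t ht1 ht2] at hnx
      by_contra htS
      have hsome : ∃ s ∈ S, s < t := by
        by_contra hc
        push_neg at hc
        exact hnx (Or.inl ⟨htS, fun s hs => not_lt.mpr (hc s hs)⟩)
      obtain ⟨s0, hs0, hs0t⟩ := hsome
      have hne : S.Nonempty := ⟨s0, hs0⟩
      have hminS := S.min'_mem hne
      have hmin_le := S.min'_le s0 hs0
      have hmin1 : 1 ≤ S.min' hne := (Finset.mem_Icc.mp (hS hminS)).1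
      have := hall (S.min' hne) (Finset.mem_Ico.mpr ⟨hmin1, by omega⟩)
      rw [hx _ hmin1 (by
        have := (Finset.mem_Icc.mp (hS hminS)).2; omega)] at this
      rcases this with ⟨hnm, -⟩ | ⟨-, s', hs', hlt⟩
      · exact hnm hminS
      · exact absurd hlt (not_lt.mpr (S.min'_le s' hs'))
    · -- a one after a zero: t ∈ S
      rw [hx t ht1 ht2] at hxt
      rcases hxt with ⟨htn, hallS⟩ | ⟨htS, -⟩
      · exfalso
        have hs' := Finset.mem_Ico.mp hs
        rw [hx s hs'.1 (by omega)] at hns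
        have : ¬ ((s ∉ S ∧ ∀ s' ∈ S, ¬ s' < s) ∨ (s ∈ S ∧ ∃ s' ∈ S, s' < s)) := hns
        push_neg at this
        obtain ⟨h1, h2⟩ := this
        by_cases hsS : s ∈ S
        · exact (hallS s hsS) hs'.2
        · obtain ⟨s', hs'S, hlt⟩ := h1 hsS
          exact (hallS s' hs'S) (by omega)
      · exact htS
  · intro htS
    have hts := Finset.mem_Icc.mp (hS htS)
    have hne : S.Nonempty := ⟨t, htS⟩
    have hminS := S.min'_mem hne
    have hmin1 : 1 ≤ S.min' hne := (Finset.mem_Icc.mp (hS hminS)).1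
    have hminm : S.min' hne ≤ m := (Finset.mem_Icc.mp (hS hminS)).2
    have hminle : S.min' hne ≤ t := S.min'_le t htS
    have hxmin : ¬ xS (S.min' hne) := by
      rintro (⟨hnm, -⟩ | ⟨-, s', hs', hlt⟩)
      · exact hnm hminS
      · exact absurd hlt (not_lt.mpr (S.min'_le s' hs'))
    refine ⟨⟨hts.1, hts.2⟩, ?_⟩
    rcases Nat.eq_or_lt_of_le hminle with heq | hlt
    · refine Or.inl ⟨?_, ?_⟩
      · rw [hx t hts.1 hts.2, ← heq]
        exact hxmin
      · intro s hs
        have hs' := Finset.mem_Ico.mp hs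
        rw [hx s hs'.1 (by omega)]
        refine Or.inl ⟨?_, ?_⟩
        · intro hsS
          exact absurd (S.min'_le s hsS) (by omega)
        · intro s' hs'S
          have := S.min'_le s' hs'S
          omega
    · refine Or.inr ⟨?_, S.min' hne, ?_, ?_⟩
      · rw [hx t hts.1 hts.2]
        exact Or.inr ⟨htS, S.min' hne, hminS, hlt⟩
      · exact Finset.mem_Ico.mpr ⟨hmin1, hlt⟩
      · rw [hx _ hmin1 hminm]
        exact hxmin

lemma count_T (k : ℕ) :
    (((Finset.range m).powerset).filter (fun T => crT m T = k)).card = m.choose k := by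
  have h1 : (((Finset.range m).powerset).filter (fun T => crT m T = k)).card
      = ((Finset.Icc 1 m).powersetCard k).card := by
    refine Finset.card_bij (fun T _ => Phi2 m T) ?_ ?_ ?_
    · intro T hT
      rw [Finset.mem_filter, Finset.mem_powerset] at hT
      rw [Finset.mem_powersetCard]
      exact ⟨Finset.filter_subset _ _, by rw [card_Phi2 hT.1]; exact hT.2⟩
    · intro T1 h1 T2 h2 h
      rw [Finset.mem_filter, Finset.mem_powerset] at h1 h2
      exact Phi2_inj h1.1 h2.1 h
    · intro S hS
      rw [Finset.mem_powersetCard] at hS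
      obtain ⟨T, hTsub, hPhi⟩ := Phi2_surj hS.1
      refine ⟨T, ?_, hPhi⟩
      rw [Finset.mem_filter, Finset.mem_powerset]
      exact ⟨hTsub, by rw [← card_Phi2 hTsub, hPhi]; exact hS.2⟩
  rw [h1, Finset.card_powersetCard, Nat.card_Icc]
  norm_num

end Stmt4

theorem stmt4 (n k : ℕ) (hn : 2 ≤ n) :
    (Finset.univ.filter (fun σ : Equiv.Perm (Fin n) =>
        Avoids σ p123 ∧ Avoids σ p132 ∧ (σ ⟨n - 2, by omega⟩ : ℕ) = 0 ∧ cr σ = k)).card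
      = (n - 2).choose k := by
  have hn2 : n = (n - 2) + 2 := by omega
  have hmain : (Finset.univ.filter (fun σ : Equiv.Perm (Fin n) =>
        Avoids σ p123 ∧ Avoids σ p132 ∧ (σ ⟨n - 2, by omega⟩ : ℕ) = 0 ∧ cr σ = k)).card
      = (((Finset.range (n-2)).powerset).filter
          (fun T => Stmt4.crT (n-2) T = k)).card := by
    refine (Finset.card_bij (fun T hT => Stmt4.permT (n-2) T
      (Finset.mem_powerset.mp (Finset.mem_filter.mp hT).1) n hn2) ?_ ?_ ?_).symm
    · intro T hT
      have hmem := Finset.mem_filter.mp hT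
      have hsub := Finset.mem_powerset.mp hmem.1
      rw [Finset.mem_filter]
      refine ⟨Finset.mem_univ _, (Stmt4.permT_avoids hsub hn2).1,
        (Stmt4.permT_avoids hsub hn2).2, Stmt4.permT_pos hsub hn2 hn, ?_⟩
      rw [Stmt4.cr_permT hsub hn2]
      exact hmem.2
    · intro T1 h1 T2 h2 heq
      have e1 := Stmt4.Tof_permT (Finset.mem_powerset.mp (Finset.mem_filter.mp h1).1) hn2
      have e2 := Stmt4.Tof_permT (Finset.mem_powerset.mp (Finset.mem_filter.mp h2).1) hn2
      calc T1 = Stmt4.Tof (n-2) (Stmt4.permT (n-2) T1 _ n hn2) := e1.symm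
        _ = Stmt4.Tof (n-2) (Stmt4.permT (n-2) T2 _ n hn2) := congrArg _ heq
        _ = T2 := e2
    · intro σ hσ
      rw [Finset.mem_filter] at hσ
      obtain ⟨-, hA, hB, hp0, hcr⟩ := hσ
      have hD2 : ∀ i : Fin n, (n-2) - i.1 ≤ (σ i : ℕ) :=
        fun i => Stmt4.D2_of_avoids hn2 hA hB i
      have hpos : Stmt4.sv σ (n-2) = 0 := by
        unfold Stmt4.sv
        rw [dif_pos (show n-2 < n by omega)]
        exact hp0
      have heq := Stmt4.eq_permT hn2 σ hD2 hpos
      refine ⟨Stmt4.Tof (n-2) σ, ?_, heq.symm⟩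
      rw [Finset.mem_filter, Finset.mem_powerset]
      refine ⟨Stmt4.Tof_subset σ, ?_⟩
      rw [← Stmt4.cr_permT (Stmt4.Tof_subset σ) hn2, ← heq]
      exact hcr
  rw [hmain, Stmt4.count_T]
end

section
/- For any permutation σ of [n], the permutation π = σ^{(n+1,1)} of [n+1] defined by π(i) = σ(i)+1 for i ≤ n and π(n+1) = 1 satisfies cr(π) = cr(σ) + ut(σ) − lt(σ), where ut(σ) = |{i : σ^{-1}(i) < i < σ(i)}| and lt(σ) = |{i : σ(i) < i < σ^{-1}(i)}|. -/
open Finset Polynomial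

/-- number of upper transients -/
def ut {n : ℕ} (σ : Equiv.Perm (Fin n)) : ℕ :=
  (Finset.univ.filter (fun i : Fin n => (σ.symm i : ℕ) < (i : ℕ) ∧ (i : ℕ) < (σ i : ℕ))).card

/-- number of lower transients -/
def lt' {n : ℕ} (σ : Equiv.Perm (Fin n)) : ℕ :=
  (Finset.univ.filter (fun i : Fin n => (σ i : ℕ) < (i : ℕ) ∧ (i : ℕ) < (σ.symm i : ℕ))).card


lemma cr_eq_sum {n : ℕ} (σ : Equiv.Perm (Fin n)) :
    cr σ = ∑ i : Fin n, ∑ j : Fin n, if IsCross σ i j then 1 else 0 := by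
  rw [cr, Finset.card_filter, Fintype.sum_prod_type]

theorem stmt5 (n : ℕ) (σ : Equiv.Perm (Fin n)) (π : Equiv.Perm (Fin (n + 1)))
    (h1 : ∀ i : Fin n, (π i.castSucc : ℕ) = (σ i : ℕ) + 1)
    (h2 : π (Fin.last n) = 0) :
    cr π + lt' σ = cr σ + ut σ := by
  classical
  set Lp : Fin n → Fin n → Prop := fun i j =>
    (σ i : ℕ) < (i : ℕ) ∧ (i : ℕ) < (j : ℕ) ∧ (σ j : ℕ) = (i : ℕ) with hLp
  set Ep : Fin n → Fin n → Prop := fun i j =>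
    (j : ℕ) = (σ i : ℕ) ∧ (i : ℕ) < (σ i : ℕ) ∧ (σ i : ℕ) < (σ j : ℕ) with hEp
  -- cr π as a sum over Fin n × Fin n
  have hσlt : ∀ i : Fin n, (σ i : ℕ) < n := fun i => (σ i).isLt
  have hcrπ : cr π = ∑ i : Fin n, ∑ j : Fin n,
      if IsCross π i.castSucc j.castSucc then 1 else 0 := by
    rw [cr_eq_sum]
    rw [Fin.sum_univ_castSucc]
    have hlast1 : ∀ j : Fin (n+1), ¬ IsCross π (Fin.last n) j := by
      intro j h
      have hj : (j : ℕ) ≤ n := Nat.lt_succ_iff.mp j.isLt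
      rcases h with ⟨h1', _, _⟩ | ⟨_, _, h3'⟩
      · exact absurd (Fin.lt_def.mp h1') (by simp; omega)
      · exact absurd (Fin.lt_def.mp h3') (by simp; omega)
    have hlast2 : ∀ i : Fin n, ¬ IsCross π i.castSucc (Fin.last n) := by
      intro i h
      rcases h with ⟨_, h2', _⟩ | ⟨h1', h2', _⟩
      · rw [h1] at h2'
        have := hσlt i
        simp [Fin.last] at h2'
        omega
      · rw [h2] at h1'
        simp [Fin.lt_def] at h1'
    simp only [hlast1, if_false, Finset.sum_const_zero, add_zero]
    refine Finset.sum_congr rfl fun i _ => ?_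
    rw [Fin.sum_univ_castSucc]
    simp [hlast2]
  -- lt' as a sum
  have hlt : lt' σ = ∑ i : Fin n, ∑ j : Fin n, if Lp i j then 1 else 0 := by
    have hinner : ∀ i : Fin n, (∑ j : Fin n, if Lp i j then 1 else 0)
        = if (σ i : ℕ) < (i : ℕ) ∧ (i : ℕ) < (σ.symm i : ℕ) then 1 else 0 := by
      intro i
      rw [Finset.sum_eq_single (σ.symm i)]
      · congr 1
        simp [hLp]
      · intro j _ hj
        rw [if_neg]
        rintro ⟨-, -, hc⟩
        exact hj (by rw [← Equiv.symm_apply_apply σ j, Fin.ext_iff.mpr hc])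
      · simp
    rw [Finset.sum_congr rfl fun i _ => hinner i]
    rw [lt', Finset.card_filter]
  -- ut as a sum
  have hut : ut σ = ∑ i : Fin n, ∑ j : Fin n, if Ep i j then 1 else 0 := by
    have hinner : ∀ i : Fin n, (∑ j : Fin n, if Ep i j then 1 else 0)
        = if (i : ℕ) < (σ i : ℕ) ∧ (σ i : ℕ) < (σ (σ i) : ℕ) then 1 else 0 := by
      intro i
      rw [Finset.sum_eq_single (σ i)]
      · congr 1
        simp [hEp]
      · intro j _ hj
        rw [if_neg]
        rintro ⟨hc, -, -⟩
        exact hj (Fin.ext hc)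
      · simp
    rw [Finset.sum_congr rfl fun i _ => hinner i]
    rw [ut, Finset.card_filter]
    rw [← Equiv.sum_comp σ (fun k : Fin n =>
      if (σ.symm k : ℕ) < (k : ℕ) ∧ (k : ℕ) < (σ k : ℕ) then 1 else 0)]
    refine Finset.sum_congr rfl fun i _ => ?_
    simp
  -- pointwise identity
  have key : ∀ i j : Fin n,
      ((if IsCross π i.castSucc j.castSucc then 1 else 0) + (if Lp i j then 1 else 0) : ℕ)
      = (if IsCross σ i j then 1 else 0) + (if Ep i j then 1 else 0) := by
    intro i j
    have hi := h1 i
    have hj := h1 j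
    simp only [IsCross, Fin.lt_def, Fin.coe_castSucc, hi, hj, hLp, hEp]
    split_ifs <;> omega
  rw [hcrπ, hlt, hut, cr_eq_sum σ, ← Finset.sum_add_distrib, ← Finset.sum_add_distrib]
  refine Finset.sum_congr rfl fun i _ => ?_
  rw [← Finset.sum_add_distrib, ← Finset.sum_add_distrib]
  exact Finset.sum_congr rfl fun j _ => key i j
end

section
/- For any permutation σ of [n] and π = σ^{-1}, cr(π) = cr(σ) + ut(σ) − lt(σ), where ut(σ) = |{i : σ^{-1}(i) < i < σ(i)}| and lt(σ) = |{i : σ(i) < i < σ^{-1}(i)}|. -/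
open Finset Polynomial

theorem stmt6 (n : ℕ) (σ : Equiv.Perm (Fin n)) :
    cr σ⁻¹ + lt' σ = cr σ + ut σ := by
  classical
  -- predicates over pairs
  set A' : Fin n × Fin n → Prop := fun p => IsCross σ⁻¹ (σ p.1) (σ p.2) with hA'
  set B : Fin n × Fin n → Prop := fun p =>
    (σ p.1 : ℕ) < (p.1 : ℕ) ∧ (p.1 : ℕ) < (p.2 : ℕ) ∧ (σ p.2 : ℕ) = (p.1 : ℕ) with hB
  set C : Fin n × Fin n → Prop := fun p => IsCross σ p.1 p.2 with hC
  set D : Fin n × Fin n → Prop := fun p =>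
    (p.1 : ℕ) < (p.2 : ℕ) ∧ (p.2 : ℕ) = (σ p.1 : ℕ) ∧ (σ p.1 : ℕ) < (σ p.2 : ℕ) with hD
  have h1 : cr σ⁻¹ = (Finset.univ.filter A').card := by
    rw [cr]
    apply Finset.card_bij' (fun p _ => ((σ⁻¹ p.1, σ⁻¹ p.2) : Fin n × Fin n))
        (fun p _ => ((σ p.1, σ p.2) : Fin n × Fin n))
    · intro p hp
      simp only [Finset.mem_filter, Finset.mem_univ, true_and] at hp ⊢
      simpa [hA'] using hp
    · intro p hp
      simp only [Finset.mem_filter, Finset.mem_univ, true_and, hA'] at hp ⊢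
      exact hp
    · intro p _; simp
    · intro p _; simp
  have h2 : lt' σ = (Finset.univ.filter B).card := by
    rw [lt']
    apply Finset.card_bij' (fun i _ => ((i, σ.symm i) : Fin n × Fin n))
        (fun p _ => p.1)
    · intro i hi
      simp only [Finset.mem_filter, Finset.mem_univ, true_and] at hi ⊢
      simp only [hB]
      refine ⟨hi.1, hi.2, ?_⟩
      simp
    · intro p hp
      simp only [Finset.mem_filter, Finset.mem_univ, true_and, hB] at hp ⊢
      have h3 : σ p.2 = p.1 := Fin.val_injective hp.2.2
      have : p.2 = σ.symm p.1 := by rw [← h3]; simp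
      exact ⟨hp.1, by rw [← this]; exact hp.2.1⟩
    · intro i _; simp
    · intro p hp
      simp only [Finset.mem_filter, Finset.mem_univ, true_and, hB] at hp
      have h3 : σ p.2 = p.1 := Fin.val_injective hp.2.2
      have : p.2 = σ.symm p.1 := by rw [← h3]; simp
      simp [← this]
  have h4 : ut σ = (Finset.univ.filter D).card := by
    rw [ut]
    apply Finset.card_bij' (fun i _ => ((σ.symm i, i) : Fin n × Fin n))
        (fun p _ => p.2)
    · intro i hi
      simp only [Finset.mem_filter, Finset.mem_univ, true_and] at hi ⊢
      simp only [hD]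
      refine ⟨hi.1, ?_, ?_⟩ <;> simp [hi.2]
    · intro p hp
      simp only [Finset.mem_filter, Finset.mem_univ, true_and, hD] at hp ⊢
      have h3 : p.2 = σ p.1 := Fin.val_injective hp.2.1
      have : p.1 = σ.symm p.2 := by rw [h3]; simp
      refine ⟨by rw [← this]; exact hp.1, ?_⟩
      rw [← h3] at hp
      exact hp.2.2
    · intro i _; simp
    · intro p hp
      simp only [Finset.mem_filter, Finset.mem_univ, true_and, hD] at hp
      have h3 : p.2 = σ p.1 := Fin.val_injective hp.2.1
      have : p.1 = σ.symm p.2 := by rw [h3]; simp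
      simp [← this]
  have hdisjAB : ∀ p, A' p → ¬ B p := by
    intro p hp hq
    simp only [hA', IsCross, Fin.lt_def, Fin.le_def, Equiv.Perm.inv_def, Equiv.symm_apply_apply] at hp
    simp only [hB] at hq
    omega
  have hdisjCD : ∀ p, C p → ¬ D p := by
    intro p hp hq
    simp only [hC, IsCross, Fin.lt_def, Fin.le_def] at hp
    simp only [hD] at hq
    omega
  have key : ∀ p, (A' p ∨ B p) ↔ (C p ∨ D p) := by
    intro p
    simp only [hA', hB, hC, hD, IsCross, Fin.lt_def, Fin.le_def, Equiv.Perm.inv_def, Equiv.symm_apply_apply]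
    omega
  have hcard : ∀ (P Q : Fin n × Fin n → Prop) [DecidablePred P] [DecidablePred Q],
      (∀ p, P p → ¬ Q p) →
      (Finset.univ.filter P).card + (Finset.univ.filter Q).card
        = (Finset.univ.filter (fun p => P p ∨ Q p)).card := by
    intro P Q _ _ hdisj
    rw [Finset.filter_or]
    rw [Finset.card_union_of_disjoint]
    rw [Finset.disjoint_filter]
    intro x _ hx
    exact hdisj x hx
  rw [h1, h2, h4, cr, hcard A' B hdisjAB, hcard _ D hdisjCD]
  congr 1
  apply Finset.filter_congr
  intro p _
  simpa using key p
end

section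
/- For any permutation σ of [n] and π = rc(σ) its reverse-complement, defined by π(i) = n+1−σ(n+1−i), we have cr(π) = cr(σ) + ut(σ) − lt(σ), where ut(σ) = |{i : σ^{-1}(i) < i < σ(i)}| and lt(σ) = |{i : σ(i) < i < σ^{-1}(i)}|. -/
open Finset Polynomial

lemma card_or_split {α : Type*} [DecidableEq α] (s : Finset α) (p q : α → Prop)
    [DecidablePred p] [DecidablePred q] (h : ∀ a ∈ s, ¬(p a ∧ q a)) :
    (s.filter fun a => p a ∨ q a).card = (s.filter p).card + (s.filter q).card := by
  rw [Finset.filter_or, Finset.card_union_of_disjoint]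
  rw [Finset.disjoint_left]
  intro a ha hb
  simp only [Finset.mem_filter] at ha hb
  exact h a ha.1 ⟨ha.2, hb.2⟩

theorem stmt7 (n : ℕ) (σ π : Equiv.Perm (Fin n))
    (h : ∀ i : Fin n, π i = Fin.rev (σ (Fin.rev i))) :
    cr π + lt' σ = cr σ + ut σ := by
  classical
  set A : Fin n × Fin n → Prop :=
    fun p => (p.1 : ℕ) < p.2 ∧ (p.2 : ℕ) < (σ p.1 : ℕ) ∧ (σ p.1 : ℕ) < (σ p.2 : ℕ) with hA
  set B : Fin n × Fin n → Prop :=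
    fun p => (σ p.1 : ℕ) < (σ p.2 : ℕ) ∧ (σ p.2 : ℕ) ≤ (p.1 : ℕ) ∧ (p.1 : ℕ) < p.2 with hB
  set A' : Fin n × Fin n → Prop :=
    fun p => (p.1 : ℕ) < p.2 ∧ (p.2 : ℕ) ≤ (σ p.1 : ℕ) ∧ (σ p.1 : ℕ) < (σ p.2 : ℕ) with hA'
  set B' : Fin n × Fin n → Prop :=
    fun p => (σ p.1 : ℕ) < (σ p.2 : ℕ) ∧ (σ p.2 : ℕ) < (p.1 : ℕ) ∧ (p.1 : ℕ) < p.2 with hB'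
  set E1 : Fin n × Fin n → Prop :=
    fun p => (p.1 : ℕ) < p.2 ∧ (p.2 : ℕ) = (σ p.1 : ℕ) ∧ (σ p.1 : ℕ) < (σ p.2 : ℕ) with hE1
  set E2 : Fin n × Fin n → Prop :=
    fun p => (σ p.1 : ℕ) < (σ p.2 : ℕ) ∧ (σ p.2 : ℕ) = (p.1 : ℕ) ∧ (p.1 : ℕ) < p.2 with hE2
  -- Step 1: cr π counts A' ∨ B' (for σ) via the bijection p ↦ (p.2.rev, p.1.rev)
  have key : ∀ i j : Fin n, IsCross π i j ↔ (A' (j.rev, i.rev) ∨ B' (j.rev, i.rev)) := by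
    intro i j
    have hi := h i
    have hj := h j
    have b1 := (σ i.rev).is_lt
    have b2 := (σ j.rev).is_lt
    have b3 := i.is_lt
    have b4 := j.is_lt
    simp only [IsCross, hi, hj, hA', hB', Fin.lt_def, Fin.le_def, Fin.val_rev]
    omega
  have h1 : cr π = (Finset.univ.filter fun p : Fin n × Fin n => A' p ∨ B' p).card := by
    unfold cr
    refine Finset.card_nbij' (fun p => (p.2.rev, p.1.rev)) (fun p => (p.2.rev, p.1.rev)) ?_ ?_ ?_ ?_
    · intro p hp
      simp only [Finset.mem_coe, Finset.mem_filter, Finset.mem_univ, true_and] at hp ⊢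
      exact (key p.1 p.2).mp hp
    · intro p hp
      simp only [Finset.mem_coe, Finset.mem_filter, Finset.mem_univ, true_and] at hp ⊢
      rw [key]
      simpa [Fin.rev_rev] using hp
    · intro p hp; simp [Fin.rev_rev]
    · intro p hp; simp [Fin.rev_rev]
  -- Step 2: cr σ counts A ∨ B
  have h2 : cr σ = (Finset.univ.filter fun p : Fin n × Fin n => A p ∨ B p).card := by
    unfold cr
    refine congrArg Finset.card (Finset.filter_congr ?_)
    intro p _
    simp only [IsCross, Fin.lt_def, Fin.le_def, hA, hB]
  -- split sums
  have s1 : (Finset.univ.filter fun p : Fin n × Fin n => A' p ∨ B' p).card =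
      (Finset.univ.filter A').card + (Finset.univ.filter B').card := by
    apply card_or_split
    intro p _ ⟨hpA, hpB⟩
    simp only [hA', hB'] at hpA hpB
    omega
  have s2 : (Finset.univ.filter fun p : Fin n × Fin n => A p ∨ B p).card =
      (Finset.univ.filter A).card + (Finset.univ.filter B).card := by
    apply card_or_split
    intro p _ ⟨hpA, hpB⟩
    simp only [hA, hB] at hpA hpB
    omega
  -- A' = A ∪ E1
  have s3 : (Finset.univ.filter A').card =
      (Finset.univ.filter A).card + (Finset.univ.filter E1).card := by
    rw [show Finset.univ.filter A' = Finset.univ.filter (fun p => A p ∨ E1 p) from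
      Finset.filter_congr (by intro p _; simp only [hA, hA', hE1]; omega)]
    apply card_or_split
    intro p _ ⟨hpA, hpE⟩
    simp only [hA, hE1] at hpA hpE
    omega
  -- B = B' ∪ E2
  have s4 : (Finset.univ.filter B).card =
      (Finset.univ.filter B').card + (Finset.univ.filter E2).card := by
    rw [show Finset.univ.filter B = Finset.univ.filter (fun p => B' p ∨ E2 p) from
      Finset.filter_congr (by intro p _; simp only [hB, hB', hE2]; omega)]
    apply card_or_split
    intro p _ ⟨hpB, hpE⟩
    simp only [hB', hE2] at hpB hpE
    omega
  -- |E1| = ut σ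
  have s5 : (Finset.univ.filter E1).card = ut σ := by
    unfold ut
    refine Finset.card_nbij' (fun p => p.2) (fun k => (σ.symm k, k)) ?_ ?_ ?_ ?_
    · rintro ⟨a, b⟩ hp
      simp only [Finset.mem_coe, Finset.mem_filter, Finset.mem_univ, true_and, hE1] at hp ⊢
      obtain ⟨h1, h2, h3⟩ := hp
      have hb : b = σ a := Fin.ext h2
      subst hb
      simp only [Equiv.symm_apply_apply]
      exact ⟨h1, h3⟩
    · intro k hk
      simp only [Finset.mem_coe, Finset.mem_filter, Finset.mem_univ, true_and, hE1] at hk ⊢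
      simp only [Equiv.apply_symm_apply]
      exact ⟨hk.1, trivial, hk.2⟩
    · rintro ⟨a, b⟩ hp
      simp only [Finset.mem_coe, Finset.mem_filter, Finset.mem_univ, true_and, hE1] at hp
      have hb : b = σ a := Fin.ext hp.2.1
      subst hb
      simp
    · intro k hk; rfl
  -- |E2| = lt' σ
  have s6 : (Finset.univ.filter E2).card = lt' σ := by
    unfold lt'
    refine Finset.card_nbij' (fun p => p.1) (fun k => (k, σ.symm k)) ?_ ?_ ?_ ?_
    · rintro ⟨a, b⟩ hp
      simp only [Finset.mem_coe, Finset.mem_filter, Finset.mem_univ, true_and, hE2] at hp ⊢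
      obtain ⟨h1, h2, h3⟩ := hp
      have ha : a = σ b := Fin.ext h2.symm
      subst ha
      simp only [Equiv.symm_apply_apply]
      exact ⟨h1, h3⟩
    · intro k hk
      simp only [Finset.mem_coe, Finset.mem_filter, Finset.mem_univ, true_and, hE2] at hk ⊢
      simp only [Equiv.apply_symm_apply]
      exact ⟨hk.1, trivial, hk.2⟩
    · rintro ⟨a, b⟩ hp
      simp only [Finset.mem_coe, Finset.mem_filter, Finset.mem_univ, true_and, hE2] at hp
      have ha : a = σ b := Fin.ext hp.2.1.symm
      subst ha
      simp
    · intro k hk; rfl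
  omega
end

section
/- The map φ_1 : S_n → S_{n+1} sending σ to (σ^{-1})^{(n+1,1)} (i.e. π(i) = σ^{-1}(i)+1 for i ≤ n, π(n+1) = 1) is a bijection from S_n onto the set of permutations of [n+1] ending with 1, and it preserves the number of crossings: cr(φ_1(σ)) = cr(σ) for all σ ∈ S_n. -/
open Finset Polynomial

lemma key_cross {n : ℕ} (σ : Equiv.Perm (Fin n)) (π : Equiv.Perm (Fin (n + 1)))
    (hπ : ∀ i : Fin n, (π i.castSucc : ℕ) = (σ.symm i : ℕ) + 1) (a b : Fin n) :
    IsCross π a.castSucc b.castSucc ↔ IsCross σ (σ.symm a) (σ.symm b) := by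
  simp only [IsCross, Fin.lt_def, Fin.coe_castSucc, hπ, Equiv.apply_symm_apply]
  omega

lemma cross_ne_last {n : ℕ} (π : Equiv.Perm (Fin (n + 1))) (hlast : π (Fin.last n) = 0)
    (a b : Fin (n + 1)) (h : IsCross π a b) : a ≠ Fin.last n ∧ b ≠ Fin.last n := by
  constructor
  · rintro rfl
    rcases h with ⟨h1, _⟩ | ⟨_, _, h1⟩ <;>
      exact absurd h1 (not_lt.mpr (Fin.le_last b))
  · rintro rfl
    rcases h with ⟨_, _, h2⟩ | ⟨h2, _, _⟩ <;>
    · rw [hlast] at h2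
      exact Fin.not_lt_zero _ h2

/-- φ₁ : σ ↦ (σ⁻¹)^{(n+1,1)} is a crossing-preserving bijection from
`S_n` onto the permutations of `[n+1]` ending with 1. -/
theorem stmt8 (n : ℕ) (φ : Equiv.Perm (Fin n) → Equiv.Perm (Fin (n + 1)))
    (hφ : ∀ σ : Equiv.Perm (Fin n),
      (∀ i : Fin n, (φ σ i.castSucc : ℕ) = (σ.symm i : ℕ) + 1) ∧ φ σ (Fin.last n) = 0) :
    Set.BijOn φ Set.univ {π : Equiv.Perm (Fin (n + 1)) | π (Fin.last n) = 0} ∧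
    ∀ σ : Equiv.Perm (Fin n), cr (φ σ) = cr σ := by
  have hcr : ∀ σ : Equiv.Perm (Fin n), cr (φ σ) = cr σ := by
    intro σ
    obtain ⟨h1, h2⟩ := hφ σ
    unfold cr
    symm
    apply Finset.card_bij
      (fun q _ => ((σ q.1).castSucc, (σ q.2).castSucc))
    · intro q hq
      simp only [Finset.mem_filter, Finset.mem_univ, true_and] at hq ⊢
      rw [key_cross σ (φ σ) h1]
      simpa using hq
    · intro q1 h1' q2 h2' h
      simp only [Prod.mk.injEq] at h
      obtain ⟨ha, hb⟩ := h
      have := Fin.castSucc_injective n ha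
      have := Fin.castSucc_injective n hb
      exact Prod.ext (σ.injective ‹σ q1.1 = σ q2.1›) (σ.injective ‹σ q1.2 = σ q2.2›)
    · intro p hp
      simp only [Finset.mem_filter, Finset.mem_univ, true_and] at hp
      obtain ⟨ha, hb⟩ := cross_ne_last (φ σ) h2 p.1 p.2 hp
      set a := p.1.castPred ha with hadef
      set b := p.2.castPred hb with hbdef
      have hpa : p.1 = a.castSucc := (Fin.castSucc_castPred _ _).symm
      have hpb : p.2 = b.castSucc := (Fin.castSucc_castPred _ _).symm
      refine ⟨(σ.symm a, σ.symm b), ?_, ?_⟩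
      · simp only [Finset.mem_filter, Finset.mem_univ, true_and]
        rw [← key_cross σ (φ σ) h1, ← hpa, ← hpb]
        exact hp
      · simp only [Equiv.apply_symm_apply]
        exact Prod.ext hpa.symm hpb.symm
  refine ⟨⟨?_, ?_, ?_⟩, hcr⟩
  · intro σ _
    exact (hφ σ).2
  · intro σ _ τ _ h
    have hsymm : σ.symm = τ.symm := by
      ext i
      have e1 := (hφ σ).1 i
      have e2 := (hφ τ).1 i
      rw [h] at e1
      omega
    have : σ.symm.symm = τ.symm.symm := by rw [hsymm]
    simpa using this
  · intro π hπ
    simp only [Set.mem_setOf_eq] at hπ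
    have hne : ∀ i : Fin n, (π i.castSucc : ℕ) ≠ 0 := by
      intro i hi
      have : π i.castSucc = 0 := Fin.ext hi
      rw [← hπ] at this
      have := π.injective this
      exact absurd this (Fin.ne_last_of_lt (Fin.castSucc_lt_last i)).elim
    have hlt : ∀ i : Fin n, (π i.castSucc : ℕ) - 1 < n := by
      intro i
      have := (π i.castSucc).isLt
      have := hne i
      omega
    let f : Fin n → Fin n := fun i => ⟨(π i.castSucc : ℕ) - 1, hlt i⟩
    have hfinj : Function.Injective f := by
      intro i j hij
      simp only [f, Fin.mk.injEq] at hij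
      have hi := hne i
      have hj := hne j
      have : (π i.castSucc : ℕ) = (π j.castSucc : ℕ) := by omega
      exact Fin.castSucc_injective n (π.injective (Fin.ext this))
    let e := Equiv.ofBijective f (Finite.injective_iff_bijective.mp hfinj)
    refine ⟨e.symm, Set.mem_univ _, ?_⟩
    ext x
    induction x using Fin.lastCases with
    | last => rw [(hφ e.symm).2, hπ]
    | cast i =>
      have := (hφ e.symm).1 i
      rw [this]
      have : (e.symm.symm i : ℕ) = (π i.castSucc : ℕ) - 1 := by
        simp only [Equiv.symm_symm]
        rfl
      rw [this]
      have := hne i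
      omega
end

section
/- The map φ_2 : S_n → S_{n+1} defined by φ_2(σ) = (σ^{-1})^{(n,1)} satisfies cr(φ_2(σ)) = cr(σ) + 1 − δ_{n,σ(n)}, i.e. cr(φ_2(σ)) = cr(σ) if σ(n) = n and cr(φ_2(σ)) = cr(σ)+1 otherwise. -/
open Finset Polynomial
set_option maxHeartbeats 1000000

def emb {n : ℕ} (x : Fin n) : Fin (n + 1) :=
  if (x : ℕ) = n - 1 then ⟨n, Nat.lt_succ_self n⟩ else ⟨(x : ℕ), x.isLt.trans (Nat.lt_succ_self n)⟩

lemma emb_val {n : ℕ} (x : Fin n) :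
    (emb x : ℕ) = if (x : ℕ) = n - 1 then n else (x : ℕ) := by
  unfold emb; split <;> rfl

lemma emb_inj {n : ℕ} : Function.Injective (emb (n := n)) := by
  intro x y h
  have h' := congrArg Fin.val h
  rw [emb_val, emb_val] at h'
  have hx := x.isLt; have hy := y.isLt
  apply Fin.ext
  split at h' <;> split at h' <;> omega

lemma emb_val_ne {n : ℕ} (x : Fin n) (hn : 1 ≤ n) : (emb x : ℕ) ≠ n - 1 := by
  rw [emb_val]
  have := x.isLt
  split <;> omega

/-- φ₂ : σ ↦ (σ⁻¹)^{(n,1)} satisfies cr(φ₂ σ) = cr σ + 1 − δ_{n,σ(n)}. -/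
theorem stmt9 (n : ℕ) (hn : 1 ≤ n) (φ : Equiv.Perm (Fin n) → Equiv.Perm (Fin (n + 1)))
    (hφ : ∀ σ : Equiv.Perm (Fin n),
      (∀ i : Fin (n + 1), ∀ hi : (i : ℕ) < n - 1,
          (φ σ i : ℕ) = (σ.symm ⟨(i : ℕ), by omega⟩ : ℕ) + 1) ∧
      (φ σ ⟨n - 1, by omega⟩ : ℕ) = 0 ∧
      (φ σ ⟨n, by omega⟩ : ℕ) = (σ.symm ⟨n - 1, by omega⟩ : ℕ) + 1) :
    ∀ σ : Equiv.Perm (Fin n),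
      cr (φ σ) = if (σ ⟨n - 1, by omega⟩ : ℕ) = n - 1 then cr σ else cr σ + 1 := by
  intro σ
  obtain ⟨h1, h2, h3⟩ := hφ σ
  have hn1 : n - 1 < n := by omega
  set π := φ σ with hπdef
  set posm : Fin (n + 1) := ⟨n - 1, by omega⟩ with hposm
  set posn : Fin (n + 1) := ⟨n, by omega⟩ with hposn
  -- value of π on emb (σ a)
  have hval : ∀ a : Fin n, (π (emb (σ a)) : ℕ) = (a : ℕ) + 1 := by
    intro a
    by_cases h : ((σ a : ℕ)) = n - 1
    · have he : emb (σ a) = posn := by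
        apply Fin.ext; rw [emb_val]; simp [h, hposn]
      rw [he]
      rw [hposn] at h3 ⊢
      rw [h3]
      have h4 : (⟨n - 1, hn1⟩ : Fin n) = σ a := Fin.ext (by simp [h])
      rw [h4, Equiv.symm_apply_apply]
    · have hlt : (σ a : ℕ) < n - 1 := by have := (σ a).isLt; omega
      have he : (emb (σ a) : ℕ) = (σ a : ℕ) := by rw [emb_val]; simp [h]
      rw [h1 (emb (σ a)) (by rw [he]; exact hlt)]
      have h4 : (⟨((emb (σ a) : Fin (n+1)) : ℕ), by omega⟩ : Fin n) = σ a := Fin.ext (by simp [he])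
      rw [h4, Equiv.symm_apply_apply]
  -- crossing equivalence
  have hcross : ∀ a b : Fin n, IsCross σ a b ↔ IsCross π (emb (σ a)) (emb (σ b)) := by
    intro a b
    have hva := hval a; have hvb := hval b
    have hea := emb_val (σ a); have heb := emb_val (σ b)
    have hia := (σ a).isLt; have hib := (σ b).isLt
    have ha := a.isLt; have hb := b.isLt
    unfold IsCross
    simp only [Fin.lt_def]
    rw [hva, hvb]
    by_cases h1a : ((σ a : ℕ)) = n - 1 <;> by_cases h1b : ((σ b : ℕ)) = n - 1
    · have hab : (a : ℕ) = (b : ℕ) := by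
        have : σ a = σ b := Fin.ext (by omega)
        exact congrArg Fin.val (σ.injective this)
      simp only [h1a, h1b, if_true] at hea heb
      rw [hea, heb]; omega
    · simp only [h1a, h1b, if_true, if_false] at hea heb
      rw [hea, heb]; omega
    · simp only [h1a, h1b, if_true, if_false] at hea heb
      rw [hea, heb]; omega
    · simp only [h1a, h1b, if_false] at hea heb
      rw [hea, heb]; omega
  -- fixed point correspondence
  have hfix : (σ ⟨n - 1, hn1⟩ : ℕ) = n - 1 ↔ (σ.symm ⟨n - 1, hn1⟩ : ℕ) = n - 1 := by
    constructor
    · intro h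
      have : σ ⟨n - 1, hn1⟩ = ⟨n - 1, hn1⟩ := Fin.ext h
      rw [← this, Equiv.symm_apply_apply]
    · intro h
      have : σ.symm ⟨n - 1, hn1⟩ = ⟨n - 1, hn1⟩ := Fin.ext h
      rw [← this, Equiv.apply_symm_apply]
  -- surjectivity onto non-posm positions
  have hsurj : ∀ x : Fin (n + 1), x ≠ posm → ∃ a : Fin n, emb (σ a) = x := by
    intro x hx
    by_cases hxn : (x : ℕ) = n
    · refine ⟨σ.symm ⟨n - 1, hn1⟩, ?_⟩
      apply Fin.ext
      rw [emb_val, Equiv.apply_symm_apply]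
      simp [hxn]
    · have hne : (x : ℕ) ≠ n - 1 := fun h => hx (Fin.ext h)
      have hxlt : (x : ℕ) < n - 1 := by have := x.isLt; omega
      refine ⟨σ.symm ⟨(x : ℕ), by omega⟩, ?_⟩
      apply Fin.ext
      rw [emb_val, Equiv.apply_symm_apply]
      rw [if_neg hne]
  set S := Finset.univ.filter (fun p : Fin n × Fin n => IsCross σ p.1 p.2) with hS
  set T := Finset.univ.filter (fun p : Fin (n+1) × Fin (n+1) => IsCross π p.1 p.2) with hT
  set F : Fin n × Fin n → Fin (n+1) × Fin (n+1) := fun p => (emb (σ p.1), emb (σ p.2)) with hF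
  set X : Finset (Fin (n+1) × Fin (n+1)) :=
    if (σ ⟨n - 1, hn1⟩ : ℕ) = n - 1 then ∅ else {(posm, posn)} with hX
  have hπm : (π posm : ℕ) = 0 := h2
  have hpv : (posm : ℕ) = n - 1 := rfl
  have hnv : (posn : ℕ) = n := rfl
  have hπn : (π posn : ℕ) = (σ.symm ⟨n - 1, hn1⟩ : ℕ) + 1 := h3
  -- the set equality
  have hTeq : T = S.image F ∪ X := by
    ext ⟨i, j⟩
    simp only [hT, hS, hF, Finset.mem_union, Finset.mem_filter, Finset.mem_univ, true_and,
      Finset.mem_image, Prod.mk.injEq, Prod.exists]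
    constructor
    · intro hij
      have hjm : j ≠ posm := by
        intro hj
        rw [hj] at hij
        unfold IsCross at hij
        simp only [Fin.lt_def] at hij
        rw [hπm] at hij
        omega
      by_cases him : i = posm
      · right
        rw [him] at hij
        unfold IsCross at hij
        simp only [Fin.lt_def] at hij
        rw [hπm] at hij
        have hj := j.isLt
        have hjn : (j : ℕ) = n := by omega
        have hjeq : j = posn := Fin.ext hjn
        rw [hjeq] at hij
        rw [hπn] at hij
        have hsym : (σ.symm ⟨n - 1, hn1⟩ : ℕ) ≠ n - 1 := by
          have := (σ.symm ⟨n - 1, hn1⟩).isLt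
          omega
        have hnot : ¬ (σ ⟨n - 1, hn1⟩ : ℕ) = n - 1 := fun h => hsym (hfix.mp h)
        rw [hX, if_neg hnot]
        simp [him, hjeq]
      · left
        obtain ⟨a, ha⟩ := hsurj i him
        obtain ⟨b, hb⟩ := hsurj j hjm
        exact ⟨a, b, (hcross a b).mpr (by rw [ha, hb]; exact hij), by rw [ha, hb]; exact ⟨rfl, rfl⟩⟩
    · intro hij
      rcases hij with ⟨a, b, hab, hia, hjb⟩ | hx
      · rw [← hia, ← hjb]
        exact (hcross a b).mp hab
      · rw [hX] at hx
        split at hx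
        · simp at hx
        · simp only [Finset.mem_singleton, Prod.mk.injEq] at hx
          obtain ⟨hi, hj⟩ := hx
          rw [hi, hj]
          unfold IsCross
          simp only [Fin.lt_def]
          rw [hπm, hπn]
          have hsym : (σ.symm ⟨n - 1, hn1⟩ : ℕ) ≠ n - 1 := by
            intro h
            exact ‹¬ (σ ⟨n - 1, hn1⟩ : ℕ) = n - 1› (hfix.mpr h)
          have := (σ.symm ⟨n - 1, hn1⟩).isLt
          right
          omega
  have hFinj : Function.Injective F := by
    intro p q h
    simp only [hF, Prod.mk.injEq] at h
    exact Prod.ext (σ.injective (emb_inj h.1)) (σ.injective (emb_inj h.2))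
  have hdisj : Disjoint (S.image F) X := by
    rw [Finset.disjoint_left]
    intro p hp hpx
    simp only [hF, Finset.mem_image, Prod.exists] at hp
    obtain ⟨a, b, _, heq⟩ := hp
    rw [hX] at hpx
    split at hpx
    · simp at hpx
    · simp only [Finset.mem_singleton] at hpx
      rw [hpx] at heq
      have h1'' : emb (σ a) = posm := (Prod.mk.injEq _ _ _ _ ▸ heq).1
      exact emb_val_ne (σ a) hn (by rw [h1''])
  have hcard : cr π = cr σ + X.card := by
    show T.card = S.card + X.card
    rw [hTeq, Finset.card_union_of_disjoint hdisj, Finset.card_image_of_injective _ hFinj]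
  rw [hcard, hX]
  split
  · simp
  · simp
end

section
/- The generating functions F(312; q, z) = ∑_{n≥0} ∑_{σ ∈ S_n(312)} q^{cr(σ)} z^n and F(231; q, z) = ∑_{n≥0} ∑_{σ ∈ S_n(231)} q^{cr(σ)} z^n satisfy F(312; q, z) · (1 − z·F(231; q, z)) = 1; equivalently, for all n ≥ 1, ∑_{σ ∈ S_n(312)} q^{cr(σ)} = ∑_{j=0}^{n-1} (∑_{α ∈ S_j(231)} q^{cr(α)})·(∑_{β ∈ S_{n-1-j}(312)} q^{cr(β)}). -/
open Finset Polynomial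

section Glue
variable {j k : ℕ}

def glueF (α : Equiv.Perm (Fin j)) (β : Equiv.Perm (Fin k)) (i : Fin (j + 1 + k)) :
    Fin (j + 1 + k) :=
  if h : (i : ℕ) < j then ⟨((α.symm ⟨i, h⟩ : Fin j) : ℕ) + 1, by
    have := (α.symm ⟨(i : ℕ), h⟩).isLt; omega⟩
  else if h' : (i : ℕ) = j then ⟨0, by omega⟩
  else ⟨j + 1 + ((β ⟨(i : ℕ) - (j + 1), by omega⟩ : Fin k) : ℕ), by
    have := (β ⟨(i : ℕ) - (j + 1), by omega⟩).isLt; omega⟩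

def glueG (α : Equiv.Perm (Fin j)) (β : Equiv.Perm (Fin k)) (v : Fin (j + 1 + k)) :
    Fin (j + 1 + k) :=
  if h0 : (v : ℕ) = 0 then ⟨j, by omega⟩
  else if h : (v : ℕ) < j + 1 then ⟨((α ⟨(v : ℕ) - 1, by omega⟩ : Fin j) : ℕ), by
    have := (α ⟨(v : ℕ) - 1, by omega⟩).isLt; omega⟩
  else ⟨j + 1 + ((β.symm ⟨(v : ℕ) - (j + 1), by omega⟩ : Fin k) : ℕ), by
    have := (β.symm ⟨(v : ℕ) - (j + 1), by omega⟩).isLt; omega⟩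

lemma glueF_lt (α : Equiv.Perm (Fin j)) (β : Equiv.Perm (Fin k)) (i : Fin (j + 1 + k))
    (h : (i : ℕ) < j) : (glueF α β i : ℕ) = ((α.symm ⟨i, h⟩ : Fin j) : ℕ) + 1 := by
  unfold glueF; rw [dif_pos h]

lemma glueF_eq (α : Equiv.Perm (Fin j)) (β : Equiv.Perm (Fin k)) (i : Fin (j + 1 + k))
    (h : (i : ℕ) = j) : (glueF α β i : ℕ) = 0 := by
  unfold glueF; rw [dif_neg (by omega), dif_pos h]

lemma glueF_gt (α : Equiv.Perm (Fin j)) (β : Equiv.Perm (Fin k)) (i : Fin (j + 1 + k))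
    (h : j < (i : ℕ)) :
    (glueF α β i : ℕ) = j + 1 + ((β ⟨(i : ℕ) - (j + 1), by omega⟩ : Fin k) : ℕ) := by
  unfold glueF; rw [dif_neg (by omega), dif_neg (by omega)]

lemma glueG_zero (α : Equiv.Perm (Fin j)) (β : Equiv.Perm (Fin k)) (v : Fin (j + 1 + k))
    (h : (v : ℕ) = 0) : (glueG α β v : ℕ) = j := by
  unfold glueG; rw [dif_pos h]

lemma glueG_mid (α : Equiv.Perm (Fin j)) (β : Equiv.Perm (Fin k)) (v : Fin (j + 1 + k))
    (h0 : (v : ℕ) ≠ 0) (h : (v : ℕ) < j + 1) :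
    (glueG α β v : ℕ) = ((α ⟨(v : ℕ) - 1, by omega⟩ : Fin j) : ℕ) := by
  unfold glueG; rw [dif_neg h0, dif_pos h]

lemma glueG_hi (α : Equiv.Perm (Fin j)) (β : Equiv.Perm (Fin k)) (v : Fin (j + 1 + k))
    (h : j + 1 ≤ (v : ℕ)) :
    (glueG α β v : ℕ) = j + 1 + ((β.symm ⟨(v : ℕ) - (j + 1), by omega⟩ : Fin k) : ℕ) := by
  unfold glueG; rw [dif_neg (by omega), dif_neg (by omega)]

def glue (α : Equiv.Perm (Fin j)) (β : Equiv.Perm (Fin k)) :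
    Equiv.Perm (Fin (j + 1 + k)) where
  toFun := glueF α β
  invFun := glueG α β
  left_inv := by
    intro i
    apply Fin.ext
    by_cases h : (i : ℕ) < j
    · have hv := glueF_lt α β i h
      have ha := (α.symm ⟨(i : ℕ), h⟩).isLt
      rw [glueG_mid α β _ (by omega) (by omega)]
      have e1 : (⟨(glueF α β i : ℕ) - 1, by omega⟩ : Fin j) = α.symm ⟨(i : ℕ), h⟩ :=
        Fin.ext (by simp only [Fin.val_mk]; omega)
      rw [e1, Equiv.apply_symm_apply]
    · by_cases h' : (i : ℕ) = j
      · have hv := glueF_eq α β i h'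
        rw [glueG_zero α β _ hv]; omega
      · have hv := glueF_gt α β i (by omega)
        have hb := (β ⟨(i : ℕ) - (j + 1), by omega⟩).isLt
        rw [glueG_hi α β _ (by omega)]
        have e1 : (⟨(glueF α β i : ℕ) - (j + 1), by omega⟩ : Fin k)
            = β ⟨(i : ℕ) - (j + 1), by omega⟩ := Fin.ext (by simp only [Fin.val_mk]; omega)
        rw [e1, Equiv.symm_apply_apply]
        simp only [Fin.val_mk]; omega
  right_inv := by
    intro v
    apply Fin.ext
    by_cases h0 : (v : ℕ) = 0
    · have hv := glueG_zero α β v h0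
      rw [glueF_eq α β _ hv]; omega
    · by_cases h : (v : ℕ) < j + 1
      · have hv := glueG_mid α β v h0 h
        have ha := (α ⟨(v : ℕ) - 1, by omega⟩).isLt
        rw [glueF_lt α β _ (by omega)]
        have e1 : (⟨(glueG α β v : ℕ), by omega⟩ : Fin j) = α ⟨(v : ℕ) - 1, by omega⟩ :=
          Fin.ext (by simp only [Fin.val_mk]; omega)
        rw [e1, Equiv.symm_apply_apply]
        simp only [Fin.val_mk]; omega
      · have hv := glueG_hi α β v (by omega)
        have hb := (β.symm ⟨(v : ℕ) - (j + 1), by omega⟩).isLt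
        rw [glueF_gt α β _ (by omega)]
        have e1 : (⟨(glueG α β v : ℕ) - (j + 1), by omega⟩ : Fin k)
            = β.symm ⟨(v : ℕ) - (j + 1), by omega⟩ := Fin.ext (by simp only [Fin.val_mk]; omega)
        rw [e1, Equiv.apply_symm_apply]
        simp only [Fin.val_mk]; omega

lemma glue_lt (α : Equiv.Perm (Fin j)) (β : Equiv.Perm (Fin k)) (i : Fin (j + 1 + k))
    (h : (i : ℕ) < j) : (glue α β i : ℕ) = ((α.symm ⟨i, h⟩ : Fin j) : ℕ) + 1 :=
  glueF_lt α β i h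

lemma glue_eq (α : Equiv.Perm (Fin j)) (β : Equiv.Perm (Fin k)) (i : Fin (j + 1 + k))
    (h : (i : ℕ) = j) : (glue α β i : ℕ) = 0 := glueF_eq α β i h

lemma glue_gt (α : Equiv.Perm (Fin j)) (β : Equiv.Perm (Fin k)) (i : Fin (j + 1 + k))
    (h : j < (i : ℕ)) :
    (glue α β i : ℕ) = j + 1 + ((β ⟨(i : ℕ) - (j + 1), by omega⟩ : Fin k) : ℕ) :=
  glueF_gt α β i h

end Glue
section Patterns

lemma c312_iff {n : ℕ} (σ : Equiv.Perm (Fin n)) :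
    Contains3 σ p312 ↔ ∃ i j l : Fin n, i < j ∧ j < l ∧ σ j < σ l ∧ σ l < σ i := by
  unfold Contains3
  constructor
  · rintro ⟨i, j, l, hij, hjl, h1, h2, h3⟩
    refine ⟨i, j, l, hij, hjl, h3.mp (by decide), ?_⟩
    have h2' : ¬ σ i < σ l := fun hc => (by decide : ¬ p312 0 < p312 2) (h2.mpr hc)
    exact lt_of_le_of_ne (not_lt.mp h2') (σ.injective.ne (hij.trans hjl).ne')
  · rintro ⟨i, j, l, hij, hjl, hA, hB⟩
    exact ⟨i, j, l, hij, hjl,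
      iff_of_false (by decide) (hA.trans hB).asymm,
      iff_of_false (by decide) hB.asymm,
      iff_of_true (by decide) hA⟩

lemma c231_iff {n : ℕ} (σ : Equiv.Perm (Fin n)) :
    Contains3 σ p231 ↔ ∃ i j l : Fin n, i < j ∧ j < l ∧ σ l < σ i ∧ σ i < σ j := by
  unfold Contains3
  constructor
  · rintro ⟨i, j, l, hij, hjl, h1, h2, h3⟩
    refine ⟨i, j, l, hij, hjl, ?_, h1.mp (by decide)⟩
    have h2' : ¬ σ i < σ l := fun hc => (by decide : ¬ p231 0 < p231 2) (h2.mpr hc)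
    exact lt_of_le_of_ne (not_lt.mp h2') (σ.injective.ne (hij.trans hjl).ne')
  · rintro ⟨i, j, l, hij, hjl, hA, hB⟩
    exact ⟨i, j, l, hij, hjl,
      iff_of_true (by decide) hB,
      iff_of_false (by decide) hA.asymm,
      iff_of_false (by decide) (hA.trans hB).asymm⟩

lemma inv231 {n : ℕ} (π : Equiv.Perm (Fin n)) (h : Contains3 π p231) :
    Contains3 π⁻¹ p312 := by
  rw [c231_iff] at h
  obtain ⟨i, j, l, hij, hjl, hA, hB⟩ := h
  rw [c312_iff]
  refine ⟨π l, π i, π j, hA, hB, ?_, ?_⟩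
  · simp only [Equiv.Perm.inv_def, Equiv.symm_apply_apply]; exact hij
  · simp only [Equiv.Perm.inv_def, Equiv.symm_apply_apply]; exact hjl

lemma inv312 {n : ℕ} (ρ : Equiv.Perm (Fin n)) (h : Contains3 ρ p312) :
    Contains3 ρ⁻¹ p231 := by
  rw [c312_iff] at h
  obtain ⟨i, j, l, hij, hjl, hA, hB⟩ := h
  rw [c231_iff]
  refine ⟨ρ j, ρ l, ρ i, hA, hB, ?_, ?_⟩
  · simp only [Equiv.Perm.inv_def, Equiv.symm_apply_apply]; exact hij
  · simp only [Equiv.Perm.inv_def, Equiv.symm_apply_apply]; exact hjl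

end Patterns

section Struct
variable {j k : ℕ}

lemma cross_block (σ : Equiv.Perm (Fin (j + 1 + k)))
    (hav : Avoids σ p312) (h0 : σ ⟨j, by omega⟩ = ⟨0, by omega⟩)
    (i l : Fin (j + 1 + k)) (hi : (i : ℕ) < j) (hl : j < (l : ℕ)) : σ i < σ l := by
  by_contra hc
  have hil : i ≠ l := by intro e; rw [e] at hi; omega
  have hlt : σ l < σ i := lt_of_le_of_ne (not_lt.mp hc) (σ.injective.ne (Ne.symm hil))
  apply hav
  rw [c312_iff]
  refine ⟨i, ⟨j, by omega⟩, l, ?_, ?_, ?_, hlt⟩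
  · exact hi
  · exact hl
  · rw [h0, Fin.lt_def]
    simp only [Fin.val_mk]
    rcases Nat.eq_zero_or_pos ((σ l : ℕ)) with e | e
    · exfalso
      have hv : σ l = σ ⟨j, by omega⟩ := by rw [h0]; exact Fin.ext e
      have hv2 := congrArg Fin.val (σ.injective hv)
      simp only [Fin.val_mk] at hv2
      omega
    · exact e
lemma prefix_val_pos (σ : Equiv.Perm (Fin (j + 1 + k)))
    (h0 : σ ⟨j, by omega⟩ = ⟨0, by omega⟩)
    (i : Fin (j + 1 + k)) (hi : (i : ℕ) < j) : 1 ≤ (σ i : ℕ) := by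
  rcases Nat.eq_zero_or_pos ((σ i : ℕ)) with e | e
  · exfalso
    have hv : σ i = σ ⟨j, by omega⟩ := by rw [h0]; exact Fin.ext e
    have hv2 := congrArg Fin.val (σ.injective hv)
    simp only [Fin.val_mk] at hv2
    omega
  · exact e

lemma prefix_val_le (σ : Equiv.Perm (Fin (j + 1 + k)))
    (hav : Avoids σ p312) (h0 : σ ⟨j, by omega⟩ = ⟨0, by omega⟩)
    (i : Fin (j + 1 + k)) (hi : (i : ℕ) < j) : (σ i : ℕ) ≤ j := by
  have hcard := Finset.card_le_card_of_injOn σ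
    (s := Finset.Ioi (⟨j, by omega⟩ : Fin (j + 1 + k))) (t := Finset.Ioi (σ i))
    (fun l hl => by
      rw [Finset.mem_coe, Finset.mem_Ioi] at hl ⊢
      rw [Fin.lt_def] at hl
      simp only [Fin.val_mk] at hl
      exact cross_block σ hav h0 i l hi hl)
    (σ.injective.injOn)
  rw [Fin.card_Ioi, Fin.card_Ioi] at hcard
  simp only [Fin.val_mk] at hcard
  have := (σ i).isLt
  omega

lemma suffix_val_gt (σ : Equiv.Perm (Fin (j + 1 + k)))
    (hav : Avoids σ p312) (h0 : σ ⟨j, by omega⟩ = ⟨0, by omega⟩)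
    (l : Fin (j + 1 + k)) (hl : j < (l : ℕ)) : j < (σ l : ℕ) := by
  have hl0 : 1 ≤ (σ l : ℕ) := by
    rcases Nat.eq_zero_or_pos ((σ l : ℕ)) with e | e
    · exfalso
      have hv : σ l = σ ⟨j, by omega⟩ := by rw [h0]; exact Fin.ext e
      have hv2 := congrArg Fin.val (σ.injective hv)
      simp only [Fin.val_mk] at hv2
      omega
    · exact e
  have hcard := Finset.card_le_card_of_injOn σ
    (s := Finset.Iic (⟨j, by omega⟩ : Fin (j + 1 + k))) (t := Finset.Iio (σ l))
    (fun i hi => by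
      rw [Finset.mem_coe, Finset.mem_Iic] at hi
      rw [Finset.mem_coe, Finset.mem_Iio]
      rw [Fin.le_def] at hi
      simp only [Fin.val_mk] at hi
      rcases Nat.lt_or_ge (i : ℕ) j with h | h
      · exact cross_block σ hav h0 i l h hl
      · have : i = (⟨j, by omega⟩ : Fin (j + 1 + k)) := Fin.ext (by simp only [Fin.val_mk]; omega)
        rw [this, h0, Fin.lt_def]
        exact hl0)
    (σ.injective.injOn)
  rw [Fin.card_Iic, Fin.card_Iio] at hcard
  simp only [Fin.val_mk] at hcard
  omega

end Struct
section Avoid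
variable {j k : ℕ} (α : Equiv.Perm (Fin j)) (β : Equiv.Perm (Fin k))

lemma glue_lt'' (x : Fin j) :
    (glue α β ⟨(x : ℕ), by omega⟩ : ℕ) = ((α.symm x : Fin j) : ℕ) + 1 := by
  rw [glue_lt α β _ (show ((⟨(x : ℕ), by omega⟩ : Fin (j + 1 + k)) : ℕ) < j from x.isLt)]
  try simp only [Fin.val_mk, Fin.eta]

lemma glue_gt'' (t : Fin k) :
    (glue α β ⟨j + 1 + (t : ℕ), by omega⟩ : ℕ) = j + 1 + ((β t : Fin k) : ℕ) := by
  rw [glue_gt α β _ (show j < ((⟨j + 1 + (t : ℕ), by omega⟩ : Fin (j + 1 + k)) : ℕ) by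
    simp only [Fin.val_mk]; omega)]
  simp only [Fin.val_mk, Nat.add_sub_cancel_left, Fin.eta]

lemma symm_inv : (Equiv.symm α)⁻¹ = α := by
  rw [Equiv.Perm.inv_def, Equiv.symm_symm]

lemma glue_avoids (hα : Avoids α p231) (hβ : Avoids β p312) :
    Avoids (glue α β) p312 := by
  intro hcon
  rw [c312_iff] at hcon
  obtain ⟨a, b, c, hab, hbc, h1, h2⟩ := hcon
  rw [Fin.lt_def] at hab hbc h1 h2
  rcases Nat.lt_trichotomy (a : ℕ) j with ha | ha | ha
  · rcases Nat.lt_trichotomy (b : ℕ) j with hb | hb | hb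
    · rcases Nat.lt_trichotomy (c : ℕ) j with hc | hc | hc
      · -- all prefix
        have ea := glue_lt α β a ha
        have eb := glue_lt α β b hb
        have ec := glue_lt α β c hc
        apply hα
        have h312 : Contains3 (Equiv.symm α) p312 := by
          rw [c312_iff]
          refine ⟨⟨(a : ℕ), ha⟩, ⟨(b : ℕ), hb⟩, ⟨(c : ℕ), hc⟩, ?_, ?_, ?_, ?_⟩ <;>
            rw [Fin.lt_def] <;> (try simp only [Fin.val_mk]) <;> omega
        have := inv312 _ h312
        rwa [symm_inv] at this
      · have e1 := glue_eq α β c hc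
        have e2 := glue_lt α β b hb
        omega
      · have e1 := glue_gt α β c hc
        have e2 := glue_lt α β a ha
        have := (β ⟨(c : ℕ) - (j + 1), by omega⟩).isLt
        omega
    · have hc : j < (c : ℕ) := by omega
      have e1 := glue_gt α β c hc
      have e2 := glue_lt α β a ha
      have := (α.symm ⟨(a : ℕ), ha⟩).isLt
      omega
    · have hc : j < (c : ℕ) := by omega
      have e1 := glue_gt α β c hc
      have e2 := glue_lt α β a ha
      have := (α.symm ⟨(a : ℕ), ha⟩).isLt
      omega
  · have e1 := glue_eq α β a ha
    omega
  · have hb : j < (b : ℕ) := by omega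
    have hc : j < (c : ℕ) := by omega
    have ea := glue_gt α β a ha
    have eb := glue_gt α β b hb
    have ec := glue_gt α β c hc
    apply hβ
    rw [c312_iff]
    refine ⟨⟨(a : ℕ) - (j + 1), by omega⟩, ⟨(b : ℕ) - (j + 1), by omega⟩,
      ⟨(c : ℕ) - (j + 1), by omega⟩, ?_, ?_, ?_, ?_⟩ <;>
      rw [Fin.lt_def] <;> (try simp only [Fin.val_mk]) <;> omega

lemma glue_reflect_alpha (h : Contains3 α p231) : Contains3 (glue α β) p312 := by
  have h' := inv231 α h
  rw [Equiv.Perm.inv_def] at h'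
  rw [c312_iff] at h'
  obtain ⟨x, y, z, hxy, hyz, h1, h2⟩ := h'
  rw [Fin.lt_def] at hxy hyz h1 h2
  rw [c312_iff]
  have ex := glue_lt'' α β x
  have ey := glue_lt'' α β y
  have ez := glue_lt'' α β z
  refine ⟨⟨(x : ℕ), by omega⟩, ⟨(y : ℕ), by omega⟩, ⟨(z : ℕ), by omega⟩, ?_, ?_, ?_, ?_⟩ <;>
    rw [Fin.lt_def] <;> (try simp only [Fin.val_mk]) <;> omega

lemma glue_reflect_beta (h : Contains3 β p312) : Contains3 (glue α β) p312 := by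
  rw [c312_iff] at h
  obtain ⟨x, y, z, hxy, hyz, h1, h2⟩ := h
  rw [Fin.lt_def] at hxy hyz h1 h2
  rw [c312_iff]
  have ex := glue_gt'' α β x
  have ey := glue_gt'' α β y
  have ez := glue_gt'' α β z
  refine ⟨⟨j + 1 + (x : ℕ), by omega⟩, ⟨j + 1 + (y : ℕ), by omega⟩,
    ⟨j + 1 + (z : ℕ), by omega⟩, ?_, ?_, ?_, ?_⟩ <;>
    rw [Fin.lt_def] <;> (try simp only [Fin.val_mk]) <;> omega

end Avoid
section Cross
variable {j k : ℕ} (α : Equiv.Perm (Fin j)) (β : Equiv.Perm (Fin k))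

lemma glue_at_alpha (a : Fin j) :
    (glue α β ⟨(α a : ℕ), by omega⟩ : ℕ) = (a : ℕ) + 1 := by
  rw [glue_lt'' α β (α a), Equiv.symm_apply_apply]

lemma K1 (a b : Fin j) :
    IsCross (glue α β) ⟨(α a : ℕ), by omega⟩ ⟨(α b : ℕ), by omega⟩ ↔ IsCross α a b := by
  have ea := glue_at_alpha α β a
  have eb := glue_at_alpha α β b
  unfold IsCross
  simp only [Fin.lt_def, Fin.val_mk]
  omega

lemma K2 (s t : Fin k) :
    IsCross (glue α β) ⟨j + 1 + (s : ℕ), by omega⟩ ⟨j + 1 + (t : ℕ), by omega⟩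
      ↔ IsCross β s t := by
  have es := glue_gt'' α β s
  have et := glue_gt'' α β t
  unfold IsCross
  simp only [Fin.lt_def, Fin.val_mk]
  omega

lemma glue_val_cases (i : Fin (j + 1 + k)) :
    ((i : ℕ) < j ∧ 1 ≤ (glue α β i : ℕ) ∧ (glue α β i : ℕ) ≤ j) ∨
    ((i : ℕ) = j ∧ (glue α β i : ℕ) = 0) ∨
    (j < (i : ℕ) ∧ j < (glue α β i : ℕ)) := by
  rcases Nat.lt_trichotomy (i : ℕ) j with h | h | h
  · left
    have := glue_lt α β i h
    have := (α.symm ⟨(i : ℕ), h⟩).isLt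
    omega
  · right; left
    exact ⟨h, glue_eq α β i h⟩
  · right; right
    have := glue_gt α β i h
    omega

lemma K3 (p q : Fin (j + 1 + k)) (h : IsCross (glue α β) p q) :
    ((p : ℕ) < j ∧ (q : ℕ) < j) ∨ (j < (p : ℕ) ∧ j < (q : ℕ)) := by
  have hp := glue_val_cases α β p
  have hq := glue_val_cases α β q
  unfold IsCross at h
  simp only [Fin.lt_def] at h
  omega

lemma cr_glue : cr (glue α β) = cr α + cr β := by
  classical
  unfold cr
  have himg : (Finset.univ.filter
        (fun p : Fin (j + 1 + k) × Fin (j + 1 + k) => IsCross (glue α β) p.1 p.2))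
      = ((Finset.univ.filter (fun p : Fin j × Fin j => IsCross α p.1 p.2)).image
          (fun p : Fin j × Fin j =>
            ((⟨(α p.1 : ℕ), by omega⟩ : Fin (j + 1 + k)), (⟨(α p.2 : ℕ), by omega⟩ : Fin (j + 1 + k))))) ∪
        ((Finset.univ.filter (fun p : Fin k × Fin k => IsCross β p.1 p.2)).image
          (fun p : Fin k × Fin k =>
            ((⟨j + 1 + (p.1 : ℕ), by omega⟩ : Fin (j + 1 + k)),
             (⟨j + 1 + (p.2 : ℕ), by omega⟩ : Fin (j + 1 + k))))) := by
    ext p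
    simp only [Finset.mem_filter, Finset.mem_univ, true_and, Finset.mem_union,
      Finset.mem_image]
    constructor
    · intro h
      rcases K3 α β p.1 p.2 h with ⟨hp, hq⟩ | ⟨hp, hq⟩
      · left
        refine ⟨(α.symm ⟨(p.1 : ℕ), hp⟩, α.symm ⟨(p.2 : ℕ), hq⟩), ?_, ?_⟩
        · rw [← K1 α β]
          have e1 : (⟨(α (α.symm ⟨(p.1 : ℕ), hp⟩) : ℕ), by omega⟩ : Fin (j + 1 + k)) = p.1 := by
            apply Fin.ext
            simp only [Fin.val_mk, Equiv.apply_symm_apply]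
          have e2 : (⟨(α (α.symm ⟨(p.2 : ℕ), hq⟩) : ℕ), by omega⟩ : Fin (j + 1 + k)) = p.2 := by
            apply Fin.ext
            simp only [Fin.val_mk, Equiv.apply_symm_apply]
          rw [e1, e2]
          exact h
        · apply Prod.ext <;> apply Fin.ext <;>
            simp only [Fin.val_mk, Equiv.apply_symm_apply]
      · right
        refine ⟨(⟨(p.1 : ℕ) - (j + 1), by omega⟩, ⟨(p.2 : ℕ) - (j + 1), by omega⟩), ?_, ?_⟩
        · rw [← K2 α β]
          have e1 : (⟨j + 1 + ((⟨(p.1 : ℕ) - (j + 1), by omega⟩ : Fin k) : ℕ), by omega⟩ :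
              Fin (j + 1 + k)) = p.1 := by
            apply Fin.ext
            simp only [Fin.val_mk]
            omega
          have e2 : (⟨j + 1 + ((⟨(p.2 : ℕ) - (j + 1), by omega⟩ : Fin k) : ℕ), by omega⟩ :
              Fin (j + 1 + k)) = p.2 := by
            apply Fin.ext
            simp only [Fin.val_mk]
            omega
          rw [e1, e2]
          exact h
        · apply Prod.ext <;> apply Fin.ext <;> (simp only [Fin.val_mk]; omega)
    · rintro (⟨⟨a, b⟩, hab, rfl⟩ | ⟨⟨s, t⟩, hst, rfl⟩)
      · exact (K1 α β a b).mpr hab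
      · exact (K2 α β s t).mpr hst
  rw [himg]
  rw [Finset.card_union_of_disjoint]
  · rw [Finset.card_image_of_injective, Finset.card_image_of_injective]
    · intro p q hpq
      rw [Prod.ext_iff] at hpq
      obtain ⟨h1, h2⟩ := hpq
      have h1' := congrArg Fin.val h1
      have h2' := congrArg Fin.val h2
      simp only [Fin.val_mk] at h1' h2'
      apply Prod.ext <;> apply Fin.ext <;> omega
    · intro p q hpq
      rw [Prod.ext_iff] at hpq
      obtain ⟨h1, h2⟩ := hpq
      have h1' := congrArg Fin.val h1
      have h2' := congrArg Fin.val h2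
      simp only [Fin.val_mk] at h1' h2'
      apply Prod.ext
      · exact α.injective (Fin.ext h1')
      · exact α.injective (Fin.ext h2')
  · rw [Finset.disjoint_left]
    rintro p hp1 hp2
    simp only [Finset.mem_image, Finset.mem_filter, Finset.mem_univ, true_and] at hp1 hp2
    obtain ⟨x, _, hx⟩ := hp1
    obtain ⟨y, _, hy⟩ := hp2
    have := congrArg (fun z : Fin (j + 1 + k) × Fin (j + 1 + k) => (z.1 : ℕ)) hx
    have := congrArg (fun z : Fin (j + 1 + k) × Fin (j + 1 + k) => (z.1 : ℕ)) hy
    simp only [Fin.val_mk] at *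
    have hb := (α x.1).isLt
    omega

end Cross
section Decomp
variable {j k : ℕ}

lemma pos_of_val_le (σ : Equiv.Perm (Fin (j + 1 + k))) (hav : Avoids σ p312)
    (h0 : σ ⟨j, by omega⟩ = ⟨0, by omega⟩) (w : Fin (j + 1 + k))
    (hw1 : 1 ≤ (w : ℕ)) (hw2 : (w : ℕ) ≤ j) :
    ((σ.symm w : Fin (j + 1 + k)) : ℕ) < j := by
  have hl : σ (σ.symm w) = w := σ.apply_symm_apply w
  by_contra hcon
  rcases Nat.lt_or_ge j ((σ.symm w : Fin (j + 1 + k)) : ℕ) with h | h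
  · have := suffix_val_gt σ hav h0 _ h
    rw [hl] at this
    omega
  · have he : (σ.symm w : Fin (j + 1 + k)) = ⟨j, by omega⟩ := Fin.ext (by simp only [Fin.val_mk]; omega)
    rw [he, h0] at hl
    have := congrArg Fin.val hl
    simp only [Fin.val_mk] at this
    omega

lemma pos_of_val_gt (σ : Equiv.Perm (Fin (j + 1 + k))) (hav : Avoids σ p312)
    (h0 : σ ⟨j, by omega⟩ = ⟨0, by omega⟩) (w : Fin (j + 1 + k))
    (hw : j < (w : ℕ)) :
    j < ((σ.symm w : Fin (j + 1 + k)) : ℕ) := by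
  have hl : σ (σ.symm w) = w := σ.apply_symm_apply w
  by_contra hcon
  rcases Nat.lt_or_ge ((σ.symm w : Fin (j + 1 + k)) : ℕ) j with h | h
  · have := prefix_val_le σ hav h0 _ h
    rw [hl] at this
    omega
  · have he : (σ.symm w : Fin (j + 1 + k)) = ⟨j, by omega⟩ := Fin.ext (by simp only [Fin.val_mk]; omega)
    rw [he, h0] at hl
    have := congrArg Fin.val hl
    simp only [Fin.val_mk] at this
    omega

noncomputable def permA (σ : Equiv.Perm (Fin (j + 1 + k)))
    (h1 : ∀ v : Fin j, ((σ.symm ⟨(v : ℕ) + 1, by omega⟩ : Fin (j + 1 + k)) : ℕ) < j) :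
    Equiv.Perm (Fin j) :=
  Equiv.ofBijective (fun v => ⟨((σ.symm ⟨(v : ℕ) + 1, by omega⟩ : Fin (j + 1 + k)) : ℕ), h1 v⟩)
    (Finite.injective_iff_bijective.mp (by
      intro a b hab
      have h0' := congrArg (fun x : Fin j => (x : ℕ)) hab
      have h' : ((σ.symm ⟨(a : ℕ) + 1, by omega⟩ : Fin (j + 1 + k)) : ℕ)
          = ((σ.symm ⟨(b : ℕ) + 1, by omega⟩ : Fin (j + 1 + k)) : ℕ) := h0'
      have h'' := σ.symm.injective (Fin.ext h')
      have h3 := congrArg Fin.val h''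
      simp only [Fin.val_mk] at h3
      exact Fin.ext (by omega)))

lemma permA_apply_val (σ : Equiv.Perm (Fin (j + 1 + k)))
    (h1 : ∀ v : Fin j, ((σ.symm ⟨(v : ℕ) + 1, by omega⟩ : Fin (j + 1 + k)) : ℕ) < j)
    (v : Fin j) :
    ((permA σ h1 v : Fin j) : ℕ) = ((σ.symm ⟨(v : ℕ) + 1, by omega⟩ : Fin (j + 1 + k)) : ℕ) :=
  rfl

noncomputable def permB (σ : Equiv.Perm (Fin (j + 1 + k)))
    (h4 : ∀ t : Fin k, j < ((σ ⟨j + 1 + (t : ℕ), by omega⟩ : Fin (j + 1 + k)) : ℕ)) :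
    Equiv.Perm (Fin k) :=
  Equiv.ofBijective (fun t => ⟨((σ ⟨j + 1 + (t : ℕ), by omega⟩ : Fin (j + 1 + k)) : ℕ) - (j + 1),
      by have := h4 t; omega⟩)
    (Finite.injective_iff_bijective.mp (by
      intro a b hab
      have h0' := congrArg (fun x : Fin k => (x : ℕ)) hab
      have h' : ((σ ⟨j + 1 + (a : ℕ), by omega⟩ : Fin (j + 1 + k)) : ℕ) - (j + 1)
          = ((σ ⟨j + 1 + (b : ℕ), by omega⟩ : Fin (j + 1 + k)) : ℕ) - (j + 1) := h0'
      have ha := h4 a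
      have hb := h4 b
      have hv : ((σ ⟨j + 1 + (a : ℕ), by omega⟩ : Fin (j + 1 + k)) : ℕ)
          = ((σ ⟨j + 1 + (b : ℕ), by omega⟩ : Fin (j + 1 + k)) : ℕ) := by omega
      have h'' := σ.injective (Fin.ext hv)
      have h3' := congrArg Fin.val h''
      simp only [Fin.val_mk] at h3'
      exact Fin.ext (by omega)))

lemma permB_apply_val (σ : Equiv.Perm (Fin (j + 1 + k)))
    (h4 : ∀ t : Fin k, j < ((σ ⟨j + 1 + (t : ℕ), by omega⟩ : Fin (j + 1 + k)) : ℕ))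
    (t : Fin k) :
    ((permB σ h4 t : Fin k) : ℕ)
      = ((σ ⟨j + 1 + (t : ℕ), by omega⟩ : Fin (j + 1 + k)) : ℕ) - (j + 1) :=
  rfl

lemma glue_decomp (σ : Equiv.Perm (Fin (j + 1 + k))) (hav : Avoids σ p312)
    (h0 : σ ⟨j, by omega⟩ = ⟨0, by omega⟩) :
    ∃ (α : Equiv.Perm (Fin j)) (β : Equiv.Perm (Fin k)), glue α β = σ := by
  have h1 : ∀ v : Fin j, ((σ.symm ⟨(v : ℕ) + 1, by omega⟩ : Fin (j + 1 + k)) : ℕ) < j :=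
    fun v => pos_of_val_le σ hav h0 _ (by simp only [Fin.val_mk]; omega)
      (by simp only [Fin.val_mk]; omega)
  have h4 : ∀ t : Fin k, j < ((σ ⟨j + 1 + (t : ℕ), by omega⟩ : Fin (j + 1 + k)) : ℕ) :=
    fun t => suffix_val_gt σ hav h0 _ (by simp only [Fin.val_mk]; omega)
  refine ⟨permA σ h1, permB σ h4, ?_⟩
  apply Equiv.ext
  intro i
  apply Fin.ext
  rcases Nat.lt_trichotomy (i : ℕ) j with h | h | h
  · rw [glue_lt _ _ i h]
    have ha := (permA σ h1).apply_symm_apply ⟨(i : ℕ), h⟩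
    have hv := congrArg Fin.val ha
    rw [permA_apply_val] at hv
    simp only [Fin.val_mk] at hv
    have he : (σ.symm ⟨((((permA σ h1).symm ⟨(i : ℕ), h⟩ : Fin j) : ℕ)) + 1, by omega⟩ :
        Fin (j + 1 + k)) = i := Fin.ext hv
    have := congrArg σ he
    rw [σ.apply_symm_apply] at this
    have hfin := congrArg Fin.val this
    simp only [Fin.val_mk] at hfin
    omega
  · rw [glue_eq _ _ i h]
    have he : i = (⟨j, by omega⟩ : Fin (j + 1 + k)) := Fin.ext (by simp only [Fin.val_mk]; omega)
    rw [he, h0]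
  · rw [glue_gt _ _ i h]
    rw [permB_apply_val]
    simp only [Fin.val_mk]
    rw [show ((⟨j + 1 + ((i : ℕ) - (j + 1)), by omega⟩ : Fin (j + 1 + k))) = i from
      Fin.ext (by simp only [Fin.val_mk]; omega)]
    have := suffix_val_gt σ hav h0 i h
    omega

end Decomp
section Assemble
variable {j k : ℕ}

lemma glue_inj {α α' : Equiv.Perm (Fin j)} {β β' : Equiv.Perm (Fin k)}
    (h : glue α β = glue α' β') : α = α' ∧ β = β' := by
  constructor
  · have hsymm : α.symm = α'.symm := by
      apply Equiv.ext
      intro x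
      have h1 := glue_lt α β ⟨(x : ℕ), by omega⟩ (show ((⟨(x : ℕ), by omega⟩ :
        Fin (j + 1 + k)) : ℕ) < j from x.isLt)
      have h2 := glue_lt α' β' ⟨(x : ℕ), by omega⟩ (show ((⟨(x : ℕ), by omega⟩ :
        Fin (j + 1 + k)) : ℕ) < j from x.isLt)
      rw [h] at h1
      apply Fin.ext
      have hx : (⟨((⟨(x : ℕ), by omega⟩ : Fin (j + 1 + k)) : ℕ), x.isLt⟩ : Fin j) = x :=
        Fin.ext rfl
      rw [hx] at h1 h2
      omega
    have := congrArg Equiv.symm hsymm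
    rwa [Equiv.symm_symm, Equiv.symm_symm] at this
  · apply Equiv.ext
    intro t
    have h1 := glue_gt'' α β t
    have h2 := glue_gt'' α' β' t
    rw [h] at h1
    apply Fin.ext
    omega

lemma core (j k : ℕ) :
    (∑ σ ∈ Finset.univ.filter (fun σ : Equiv.Perm (Fin (j + 1 + k)) =>
        Avoids σ p312 ∧ σ ⟨j, by omega⟩ = ⟨0, by omega⟩),
      (Polynomial.X : Polynomial ℤ) ^ cr σ)
    = (∑ α ∈ Finset.univ.filter (fun α : Equiv.Perm (Fin j) => Avoids α p231),
        (Polynomial.X : Polynomial ℤ) ^ cr α) *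
      (∑ β ∈ Finset.univ.filter (fun β : Equiv.Perm (Fin k) => Avoids β p312),
        (Polynomial.X : Polynomial ℤ) ^ cr β) := by
  classical
  rw [Finset.sum_mul_sum]
  rw [← Finset.sum_product']
  refine (Finset.sum_bij (fun (p : Equiv.Perm (Fin j) × Equiv.Perm (Fin k)) _ =>
    glue p.1 p.2) ?_ ?_ ?_ ?_).symm
  · rintro ⟨α, β⟩ hp
    rw [Finset.mem_product, Finset.mem_filter, Finset.mem_filter] at hp
    obtain ⟨⟨-, hα⟩, -, hβ⟩ := hp
    rw [Finset.mem_filter]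
    refine ⟨Finset.mem_univ _, glue_avoids α β hα hβ, ?_⟩
    apply Fin.ext
    exact glue_eq α β _ rfl
  · intro p hp q hq hpq
    obtain ⟨h1, h2⟩ := glue_inj hpq
    exact Prod.ext h1 h2
  · intro σ hσ
    rw [Finset.mem_filter] at hσ
    obtain ⟨-, hav, h0⟩ := hσ
    obtain ⟨α, β, hglue⟩ := glue_decomp σ hav h0
    refine ⟨(α, β), ?_, hglue⟩
    rw [Finset.mem_product, Finset.mem_filter, Finset.mem_filter]
    refine ⟨⟨Finset.mem_univ _, ?_⟩, Finset.mem_univ _, ?_⟩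
    · intro hcon
      exact hav (hglue ▸ glue_reflect_alpha α β hcon)
    · intro hcon
      exact hav (hglue ▸ glue_reflect_beta α β hcon)
  · rintro ⟨α, β⟩ -
    rw [cr_glue, pow_add]

lemma core' (n j k : ℕ) (hnk : n = j + 1 + k) (hn : 0 < n) :
    (∑ σ ∈ Finset.univ.filter (fun σ : Equiv.Perm (Fin n) =>
        Avoids σ p312 ∧ ((σ.symm ⟨0, hn⟩ : Fin n) : ℕ) = j),
      (Polynomial.X : Polynomial ℤ) ^ cr σ)
    = (∑ α ∈ Finset.univ.filter (fun α : Equiv.Perm (Fin j) => Avoids α p231),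
        (Polynomial.X : Polynomial ℤ) ^ cr α) *
      (∑ β ∈ Finset.univ.filter (fun β : Equiv.Perm (Fin k) => Avoids β p312),
        (Polynomial.X : Polynomial ℤ) ^ cr β) := by
  classical
  subst hnk
  rw [← core j k]
  congr 1
  apply Finset.filter_congr
  intro σ _
  constructor
  · rintro ⟨hav, hpos⟩
    refine ⟨hav, ?_⟩
    have he : (σ.symm ⟨0, hn⟩ : Fin (j + 1 + k)) = ⟨j, by omega⟩ := Fin.ext (by
      simp only [Fin.val_mk]; omega)
    have := congrArg σ he
    rw [σ.apply_symm_apply] at this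
    exact this.symm
  · rintro ⟨hav, h0⟩
    refine ⟨hav, ?_⟩
    have : σ.symm ⟨0, hn⟩ = ⟨j, by omega⟩ := by
      rw [Equiv.symm_apply_eq]
      rw [← h0]
    rw [this]

end Assemble

theorem stmt11 (n : ℕ) (hn : 1 ≤ n) :
    (∑ σ ∈ Finset.univ.filter (fun σ : Equiv.Perm (Fin n) => Avoids σ p312),
        (Polynomial.X : Polynomial ℤ) ^ cr σ)
      = ∑ j ∈ Finset.range n,
          (∑ α ∈ Finset.univ.filter (fun α : Equiv.Perm (Fin j) => Avoids α p231),
              (Polynomial.X : Polynomial ℤ) ^ cr α) *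
          (∑ β ∈ Finset.univ.filter (fun β : Equiv.Perm (Fin (n - 1 - j)) => Avoids β p312),
              (Polynomial.X : Polynomial ℤ) ^ cr β) := by
  classical
  have hn0 : 0 < n := hn
  rw [← Finset.sum_fiberwise_of_maps_to
    (g := fun σ : Equiv.Perm (Fin n) => ((σ.symm ⟨0, hn0⟩ : Fin n) : ℕ))
    (t := Finset.range n)
    (fun σ _ => Finset.mem_range.mpr (Fin.isLt _))
    (fun σ => (Polynomial.X : Polynomial ℤ) ^ cr σ)]
  apply Finset.sum_congr rfl
  intro j hj
  rw [Finset.mem_range] at hj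
  rw [Finset.filter_filter]
  exact core' n j (n - 1 - j) (by omega) hn0
end
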